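/- arXiv:2311.15467 — 10 statements merged into one kernel-verified Lean document; each statement's English description precedes it below -/
import Mathlib

section
/- Let S be a compact connected subset of a metric space M. If S is locally LNE (every point of S has an open neighbourhood U in M such that S ∩ U is LNE), then S is LNE: there exists a constant L ≥ 1 such that d_inn^S(s,s') ≤ L · d(s,s') for all s, s' in S. -/
open Set Metric

/-- Length of a path `γ` parametrized by `[0,1]`, as the total variation on `[0,1]`. -/
noncomputable def pathLength {M : Type*} [PseudoEMetricSpace M] (γ : ℝ → M) : ENNReal :=
  eVariationOn γ (Set.Icc 0 1)

/-- Inner distance in a subset `S`: infimum of lengths of continuous paths in `S`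
joining `x` and `y` (it is `∞` if there is no such path). -/
noncomputable def innerDist {M : Type*} [PseudoEMetricSpace M] (S : Set M) (x y : M) : ENNReal :=
  sInf {l : ENNReal | ∃ γ : ℝ → M, ContinuousOn γ (Set.Icc 0 1) ∧
    Set.MapsTo γ (Set.Icc 0 1) S ∧ γ 0 = x ∧ γ 1 = y ∧ l = pathLength γ}

section AuxInnerDist
variable {M : Type*} [PseudoEMetricSpace M]

lemma innerDist_mono {S T : Set M} (h : S ⊆ T) (x y : M) :
    innerDist T x y ≤ innerDist S x y := by
  apply sInf_le_sInf
  rintro l ⟨γ, hc, hm, h0, h1, hl⟩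
  exact ⟨γ, hc, hm.mono_right h, h0, h1, hl⟩

lemma innerDist_self {S : Set M} {x : M} (hx : x ∈ S) : innerDist S x x = 0 := by
  refine le_antisymm (sInf_le ?_) zero_le
  refine ⟨fun _ => x, continuousOn_const, fun t _ => hx, rfl, rfl, ?_⟩
  exact (eVariationOn.constant_on (by simp [Set.Subsingleton])).symm

lemma innerDist_symm_le (S : Set M) (x y : M) : innerDist S y x ≤ innerDist S x y := by
  apply sInf_le_sInf_of_isCoinitialFor
  rintro l ⟨γ, hc, hm, h0, h1, hl⟩
  have hmap : MapsTo (fun t : ℝ => 1 - t) (Icc 0 1) (Icc (0:ℝ) 1) := fun t ht =>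
    ⟨show (0:ℝ) ≤ 1 - t by linarith [ht.2], show (1:ℝ) - t ≤ 1 by linarith [ht.1]⟩
  have him : (fun t : ℝ => 1 - t) '' Icc 0 1 = Icc (0:ℝ) 1 := by
    ext u; constructor
    · rintro ⟨t, ⟨ht0, ht1⟩, rfl⟩
      exact ⟨show (0:ℝ) ≤ 1 - t by linarith, show (1:ℝ) - t ≤ 1 by linarith⟩
    · rintro ⟨hu0, hu1⟩; exact ⟨1 - u, ⟨by linarith, by linarith⟩, by ring⟩
  refine ⟨l, ⟨fun t => γ (1 - t), hc.comp ((continuous_const.sub continuous_id).continuousOn) hmap,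
    fun t ht => hm (hmap ht), by simpa using h1, by simpa using h0, ?_⟩, le_rfl⟩
  rw [hl]
  unfold pathLength
  have : (fun t : ℝ => γ (1 - t)) = γ ∘ (fun t : ℝ => 1 - t) := rfl
  rw [this, eVariationOn.comp_eq_of_antitoneOn γ _ (fun a _ b _ hab => show (1:ℝ) - b ≤ 1 - a by linarith), him]

lemma innerDist_symm (S : Set M) (x y : M) : innerDist S x y = innerDist S y x :=
  le_antisymm (innerDist_symm_le S y x) (innerDist_symm_le S x y)

lemma concat_exists {S : Set M} {x y z : M} {γ1 γ2 : ℝ → M}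
    (h1c : ContinuousOn γ1 (Icc 0 1)) (h1m : MapsTo γ1 (Icc 0 1) S)
    (h10 : γ1 0 = x) (h11 : γ1 1 = y)
    (h2c : ContinuousOn γ2 (Icc 0 1)) (h2m : MapsTo γ2 (Icc 0 1) S)
    (h20 : γ2 0 = y) (h21 : γ2 1 = z) :
    ∃ γ : ℝ → M, ContinuousOn γ (Icc 0 1) ∧ MapsTo γ (Icc 0 1) S ∧
      γ 0 = x ∧ γ 1 = z ∧ pathLength γ = pathLength γ1 + pathLength γ2 := by
  classical
  set γ : ℝ → M := fun t => if t ≤ 1/2 then γ1 (2*t) else γ2 (2*t-1) with hγ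
  have e1 : EqOn γ (fun t => γ1 (2*t)) (Icc 0 (1/2)) := fun t ht => by
    simp only [hγ, if_pos ht.2]
  have e2 : EqOn γ (fun t => γ2 (2*t-1)) (Icc (1/2) 1) := by
    intro t ht
    rcases lt_or_eq_of_le ht.1 with h | h
    · simp only [hγ, if_neg (not_le.2 h)]
    · simp only [hγ, ← h]
      norm_num [h11, h20]
  have hmap1 : MapsTo (fun t : ℝ => 2*t) (Icc 0 (1/2)) (Icc (0:ℝ) 1) := fun t ht =>
    ⟨show (0:ℝ) ≤ 2*t by linarith [ht.1], show (2:ℝ)*t ≤ 1 by linarith [ht.2]⟩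
  have hmap2 : MapsTo (fun t : ℝ => 2*t-1) (Icc (1/2) 1) (Icc (0:ℝ) 1) := fun t ht =>
    ⟨show (0:ℝ) ≤ 2*t-1 by linarith [ht.1], show (2:ℝ)*t-1 ≤ 1 by linarith [ht.2]⟩
  have him1 : (fun t : ℝ => 2*t) '' Icc 0 (1/2) = Icc (0:ℝ) 1 := by
    ext u; constructor
    · rintro ⟨t, ⟨ht0, ht1⟩, rfl⟩
      exact ⟨show (0:ℝ) ≤ 2*t by linarith, show (2:ℝ)*t ≤ 1 by linarith⟩
    · rintro ⟨hu0, hu1⟩; exact ⟨u/2, ⟨by linarith, by linarith⟩, by ring⟩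
  have him2 : (fun t : ℝ => 2*t-1) '' Icc (1/2) 1 = Icc (0:ℝ) 1 := by
    ext u; constructor
    · rintro ⟨t, ⟨ht0, ht1⟩, rfl⟩
      exact ⟨show (0:ℝ) ≤ 2*t-1 by linarith, show (2:ℝ)*t-1 ≤ 1 by linarith⟩
    · rintro ⟨hu0, hu1⟩; exact ⟨(u+1)/2, ⟨by linarith, by linarith⟩, by ring⟩
  have c1 : ContinuousOn γ (Icc 0 (1/2)) :=
    ((h1c.comp ((continuous_const.mul continuous_id).continuousOn) hmap1)).congr e1
  have c2 : ContinuousOn γ (Icc (1/2) 1) :=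
    ((h2c.comp (((continuous_const.mul continuous_id).sub continuous_const).continuousOn)
      hmap2)).congr e2
  have hunion : Icc (0:ℝ) (1/2) ∪ Icc (1/2) 1 = Icc 0 1 :=
    Icc_union_Icc_eq_Icc (by norm_num) (by norm_num)
  have hcont : ContinuousOn γ (Icc 0 1) := by
    rw [← hunion]
    intro t ht
    have hA : ContinuousWithinAt γ (Icc 0 (1/2)) t := by
      by_cases h : t ∈ Icc (0:ℝ) (1/2)
      · exact c1 t h
      · refine continuousWithinAt_of_notMem_closure ?_
        rw [isClosed_Icc.closure_eq]; exact h
    have hB : ContinuousWithinAt γ (Icc (1/2) 1) t := by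
      by_cases h : t ∈ Icc (1/2:ℝ) 1
      · exact c2 t h
      · refine continuousWithinAt_of_notMem_closure ?_
        rw [isClosed_Icc.closure_eq]; exact h
    exact hA.union hB
  have hmaps : MapsTo γ (Icc 0 1) S := by
    intro t ht
    by_cases h : t ≤ 1/2
    · simp only [hγ, if_pos h]
      exact h1m ⟨by linarith [ht.1], by linarith⟩
    · simp only [hγ, if_neg h]
      push_neg at h
      exact h2m ⟨by linarith, by linarith [ht.2]⟩
  have hlen : pathLength γ = pathLength γ1 + pathLength γ2 := by
    unfold pathLength
    have key := eVariationOn.Icc_add_Icc γ (show (0:ℝ) ≤ 1/2 by norm_num)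
      (show (1/2:ℝ) ≤ 1 by norm_num) (show (1/2:ℝ) ∈ Icc 0 1 by norm_num) (s := Icc 0 1)
    have i1 : Icc (0:ℝ) 1 ∩ Icc 0 (1/2) = Icc 0 (1/2) :=
      inter_eq_self_of_subset_right (Icc_subset_Icc le_rfl (by norm_num))
    have i2 : Icc (0:ℝ) 1 ∩ Icc (1/2) 1 = Icc (1/2) 1 :=
      inter_eq_self_of_subset_right (Icc_subset_Icc (by norm_num) le_rfl)
    rw [i1, i2, inter_self] at key
    rw [← key]
    congr 1
    · rw [eVariationOn.eq_of_eqOn e1]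
      have : (fun t : ℝ => γ1 (2*t)) = γ1 ∘ (fun t : ℝ => 2*t) := rfl
      rw [this, eVariationOn.comp_eq_of_monotoneOn γ1 _
        (fun a _ b _ hab => show (2:ℝ)*a ≤ 2*b by linarith), him1]
    · rw [eVariationOn.eq_of_eqOn e2]
      have : (fun t : ℝ => γ2 (2*t-1)) = γ2 ∘ (fun t : ℝ => 2*t-1) := rfl
      rw [this, eVariationOn.comp_eq_of_monotoneOn γ2 _
        (fun a _ b _ hab => show (2:ℝ)*a-1 ≤ 2*b-1 by linarith), him2]
  exact ⟨γ, hcont, hmaps, by simp [hγ, h10], by norm_num [hγ, h21], hlen⟩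

lemma innerDist_triangle (S : Set M) (x y z : M) :
    innerDist S x z ≤ innerDist S x y + innerDist S y z := by
  refine ENNReal.le_of_forall_pos_le_add fun ε hε hfin => ?_
  have hxy : innerDist S x y ≠ ⊤ := fun h => by simp [h] at hfin
  have hyz : innerDist S y z ≠ ⊤ := fun h => by simp [h] at hfin
  have hε2 : ((ε:ENNReal)/2) ≠ 0 := by
    simp [ENNReal.div_eq_zero_iff, hε.ne']
  obtain ⟨a, ⟨γ1, h1c, h1m, h10, h11, h1l⟩, ha⟩ :
      ∃ a ∈ {l : ENNReal | ∃ γ : ℝ → M, ContinuousOn γ (Set.Icc 0 1) ∧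
        Set.MapsTo γ (Set.Icc 0 1) S ∧ γ 0 = x ∧ γ 1 = y ∧ l = pathLength γ},
        a < innerDist S x y + ε/2 :=
    sInf_lt_iff.1 (ENNReal.lt_add_right hxy hε2)
  obtain ⟨b, ⟨γ2, h2c, h2m, h20, h21, h2l⟩, hb⟩ :
      ∃ b ∈ {l : ENNReal | ∃ γ : ℝ → M, ContinuousOn γ (Set.Icc 0 1) ∧
        Set.MapsTo γ (Set.Icc 0 1) S ∧ γ 0 = y ∧ γ 1 = z ∧ l = pathLength γ},
        b < innerDist S y z + ε/2 :=
    sInf_lt_iff.1 (ENNReal.lt_add_right hyz hε2)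
  obtain ⟨γ, hc, hm, h0, h1, hl⟩ := concat_exists h1c h1m h10 h11 h2c h2m h20 h21
  have hle : innerDist S x z ≤ a + b := by
    apply sInf_le
    exact ⟨γ, hc, hm, h0, h1, by rw [hl, h1l, h2l]⟩
  calc innerDist S x z ≤ a + b := hle
    _ ≤ (innerDist S x y + ε/2) + (innerDist S y z + ε/2) := add_le_add ha.le hb.le
    _ = innerDist S x y + innerDist S y z + (ε/2 + ε/2) := by ring
    _ = innerDist S x y + innerDist S y z + ε := by rw [ENNReal.add_halves]

end AuxInnerDist

/-- `S` is Lipschitz normally embedded with constant `L`. -/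
def IsLNEWith {M : Type*} [PseudoMetricSpace M] (L : ℝ) (S : Set M) : Prop :=
  ∀ ⦃x⦄, x ∈ S → ∀ ⦃y⦄, y ∈ S → innerDist S x y ≤ ENNReal.ofReal (L * dist x y)

/-- `S` is Lipschitz normally embedded. -/
def IsLNE {M : Type*} [PseudoMetricSpace M] (S : Set M) : Prop :=
  ∃ L : ℝ, 1 ≤ L ∧ IsLNEWith L S

/-- a compact connected locally LNE subset is LNE. -/
theorem locallyLNE_implies_LNE {M : Type*} [MetricSpace M] (S : Set M)
    (hcomp : IsCompact S) (hconn : IsConnected S)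
    (hloc : ∀ s ∈ S, ∃ U : Set M, IsOpen U ∧ s ∈ U ∧ IsLNE (S ∩ U)) :
    IsLNE S := by
  classical
  obtain ⟨x0, hx0S⟩ := hconn.nonempty
  choose U hUo hUmem hLNE using hloc
  choose L hL1 hL2 using hLNE
  -- finite subcover
  obtain ⟨t, ht⟩ := hcomp.elim_finite_subcover (fun i : S => U i i.2)
    (fun i => hUo i i.2) (fun x hx => mem_iUnion.2 ⟨⟨x, hx⟩, hUmem x hx⟩)
  -- Lebesgue number for the finite subcover
  obtain ⟨δ, δpos, hδ⟩ := lebesgue_number_lemma_of_metric (ι := {i : S // i ∈ t}) hcomp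
    (fun j => hUo j.1 j.1.2) (fun x hx => by
      obtain ⟨i, hi, hxi⟩ := mem_iUnion₂.1 (ht hx)
      exact mem_iUnion.2 ⟨⟨i, hi⟩, hxi⟩)
  set Lmax : ℝ := 1 + ∑ i ∈ t, L i i.2 with hLmaxdef
  have hLnonneg : ∀ i : S, (0:ℝ) ≤ L i i.2 := fun i => le_trans zero_le_one (hL1 i i.2)
  have hLmax1 : 1 ≤ Lmax := by
    have : (0:ℝ) ≤ ∑ i ∈ t, L i i.2 := Finset.sum_nonneg fun i _ => hLnonneg i
    linarith
  have hLle : ∀ i ∈ t, L i i.2 ≤ Lmax := by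
    intro i hi
    have := Finset.single_le_sum (f := fun i : S => L i i.2) (fun j _ => hLnonneg j) hi
    linarith
  -- local estimate
  have hlocal : ∀ x ∈ S, ∀ y ∈ S, dist x y < δ →
      innerDist S x y ≤ ENNReal.ofReal (Lmax * dist x y) := by
    intro x hx y hy hd
    obtain ⟨j, hj⟩ := hδ x hx
    have hxU : x ∈ S ∩ U j.1 j.1.2 := ⟨hx, hj (mem_ball_self δpos)⟩
    have hyU : y ∈ S ∩ U j.1 j.1.2 := ⟨hy, hj (by rwa [mem_ball, dist_comm])⟩
    calc innerDist S x y ≤ innerDist (S ∩ U j.1 j.1.2) x y :=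
          innerDist_mono inter_subset_left x y
      _ ≤ ENNReal.ofReal (L j.1 j.1.2 * dist x y) := hL2 j.1 j.1.2 hxU hyU
      _ ≤ ENNReal.ofReal (Lmax * dist x y) :=
          ENNReal.ofReal_le_ofReal (mul_le_mul_of_nonneg_right (hLle j.1 j.2) dist_nonneg)
  -- a step lemma: finiteness propagates within distance δ
  have hstep : ∀ p ∈ S, ∀ q ∈ S, dist p q < δ → innerDist S x0 q ≠ ⊤ →
      innerDist S x0 p ≠ ⊤ := by
    intro p hp q hq hd hfin
    have h1 : innerDist S x0 p ≤ innerDist S x0 q + innerDist S q p := innerDist_triangle S x0 q p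
    have h2 : innerDist S q p ≤ ENNReal.ofReal (Lmax * dist q p) :=
      hlocal q hq p hp (by rwa [dist_comm])
    exact ne_top_of_le_ne_top (by
      exact ENNReal.add_ne_top.2 ⟨hfin, ne_top_of_le_ne_top ENNReal.ofReal_ne_top h2⟩) h1
  -- all inner distances from x0 are finite, by connectedness
  have hfin : ∀ x ∈ S, innerDist S x0 x ≠ ⊤ := by
    by_contra h
    push_neg at h
    obtain ⟨x1, hx1S, hx1⟩ := h
    set A := {x | x ∈ S ∧ innerDist S x0 x ≠ ⊤} with hA
    set B := {x | x ∈ S ∧ innerDist S x0 x = ⊤} with hB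
    have hWo : IsOpen (⋃ x ∈ A, ball x δ) := isOpen_biUnion fun _ _ => isOpen_ball
    have hW'o : IsOpen (⋃ x ∈ B, ball x δ) := isOpen_biUnion fun _ _ => isOpen_ball
    have hsub : S ⊆ (⋃ x ∈ A, ball x δ) ∪ (⋃ x ∈ B, ball x δ) := by
      intro x hx
      by_cases hx' : innerDist S x0 x = ⊤
      · exact Or.inr (mem_biUnion ⟨hx, hx'⟩ (mem_ball_self δpos))
      · exact Or.inl (mem_biUnion ⟨hx, hx'⟩ (mem_ball_self δpos))
    have hne1 : (S ∩ ⋃ x ∈ A, ball x δ).Nonempty := by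
      refine ⟨x0, hx0S, mem_biUnion ⟨hx0S, ?_⟩ (mem_ball_self δpos)⟩
      rw [innerDist_self hx0S]; exact ENNReal.zero_ne_top
    have hne2 : (S ∩ ⋃ x ∈ B, ball x δ).Nonempty :=
      ⟨x1, hx1S, mem_biUnion ⟨hx1S, hx1⟩ (mem_ball_self δpos)⟩
    obtain ⟨z, hzS, hzW, hzW'⟩ := hconn.isPreconnected _ _ hWo hW'o hsub hne1 hne2
    obtain ⟨p, hpA, hzp⟩ := mem_iUnion₂.1 hzW
    obtain ⟨q, hqB, hzq⟩ := mem_iUnion₂.1 hzW'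
    have hzfin : innerDist S x0 z ≠ ⊤ :=
      hstep z hzS p hpA.1 (mem_ball.1 hzp) hpA.2
    have : innerDist S x0 q ≠ ⊤ :=
      hstep q hqB.1 z hzS (by rw [dist_comm]; exact mem_ball.1 hzq) hzfin
    exact this hqB.2
  -- uniform bound via a finite δ-net
  obtain ⟨t2, ht2⟩ := hcomp.elim_finite_subcover (fun i : S => ball (i:M) δ)
    (fun _ => isOpen_ball) (fun x hx => mem_iUnion.2 ⟨⟨x, hx⟩, mem_ball_self δpos⟩)
  set C : ENNReal := t2.sup fun i : S => innerDist S x0 i with hCdef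
  have hCne : C ≠ ⊤ := by
    refine (Finset.sup_lt_iff (by simp : (⊥:ENNReal) < ⊤)).2 ?_ |>.ne
    exact fun i _ => lt_top_iff_ne_top.2 (hfin i i.2)
  have hbound : ∀ y ∈ S, innerDist S x0 y ≤ C + ENNReal.ofReal (Lmax * δ) := by
    intro y hy
    obtain ⟨i, hit2, hyi⟩ := mem_iUnion₂.1 (ht2 hy)
    have hdi : dist (i:M) y < δ := by rwa [mem_ball, dist_comm] at hyi
    calc innerDist S x0 y ≤ innerDist S x0 i + innerDist S (i:M) y :=
          innerDist_triangle S x0 i y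
      _ ≤ C + ENNReal.ofReal (Lmax * δ) := by
          refine add_le_add (Finset.le_sup (f := fun i : S => innerDist S x0 (i:M)) hit2) ?_
          refine (hlocal i i.2 y hy hdi).trans (ENNReal.ofReal_le_ofReal ?_)
          exact mul_le_mul_of_nonneg_left hdi.le (by linarith)
  set D : ENNReal := (C + ENNReal.ofReal (Lmax * δ)) + (C + ENNReal.ofReal (Lmax * δ)) with hDdef
  have hDne : D ≠ ⊤ := by
    simp only [hDdef, ENNReal.add_ne_top]
    exact ⟨⟨hCne, ENNReal.ofReal_ne_top⟩, ⟨hCne, ENNReal.ofReal_ne_top⟩⟩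
  have hglobal : ∀ x ∈ S, ∀ y ∈ S, innerDist S x y ≤ D := by
    intro x hx y hy
    calc innerDist S x y ≤ innerDist S x x0 + innerDist S x0 y := innerDist_triangle S x x0 y
      _ ≤ (C + ENNReal.ofReal (Lmax * δ)) + (C + ENNReal.ofReal (Lmax * δ)) := by
          refine add_le_add ?_ (hbound y hy)
          rw [innerDist_symm]
          exact hbound x hx
  set L' : ℝ := max Lmax (D.toReal / δ) with hL'def
  have hL'1 : Lmax ≤ L' := le_max_left _ _
  have hL'2 : D.toReal / δ ≤ L' := le_max_right _ _
  have hL'nonneg : (0:ℝ) ≤ L' := le_trans (by linarith) hL'1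
  refine ⟨L', le_trans hLmax1 hL'1, ?_⟩
  intro x hx y hy
  rcases lt_or_ge (dist x y) δ with h | h
  · exact (hlocal x hx y hy h).trans (ENNReal.ofReal_le_ofReal
      (mul_le_mul_of_nonneg_right hL'1 dist_nonneg))
  · calc innerDist S x y ≤ D := hglobal x hx y hy
      _ = ENNReal.ofReal D.toReal := (ENNReal.ofReal_toReal hDne).symm
      _ ≤ ENNReal.ofReal (L' * dist x y) := by
          refine ENNReal.ofReal_le_ofReal ?_
          have h1 : D.toReal = (D.toReal / δ) * δ := (div_mul_cancel₀ _ δpos.ne').symm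
          rw [h1]
          exact mul_le_mul hL'2 h δpos.le hL'nonneg
end

section
/- Let S be an LNE subset of a metric space M with LNE constant implied by a Lipschitz identity, and let F : S → P be a K-Lipschitz map to a metric space P. Then the graph G_F = {(s, F(s)) : s ∈ S}, as a subset of M × P equipped with the sum distance d_M + d_P, is LNE. -/
open Set Metric

/-- Splitting the variation of a curve in the `L¹` product as a sum. -/
theorem eVariationOn_prodL1_le {M P : Type*} [PseudoEMetricSpace M] [PseudoEMetricSpace P]
    (γ : ℝ → M) (δ : ℝ → P) (s : Set ℝ) :
    eVariationOn (fun t => (WithLp.equiv 1 (M × P)).symm (γ t, δ t)) s ≤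
      eVariationOn γ s + eVariationOn δ s := by
  apply iSup_le
  rintro ⟨n, ⟨u, hu, us⟩⟩
  have h : ∀ i : ℕ,
      edist ((WithLp.equiv 1 (M × P)).symm (γ (u (i+1)), δ (u (i+1))))
        ((WithLp.equiv 1 (M × P)).symm (γ (u i), δ (u i))) =
      edist (γ (u (i+1))) (γ (u i)) + edist (δ (u (i+1))) (δ (u i)) := by
    intro i
    rw [WithLp.prod_edist_eq_add (by norm_num)]
    simp
  simp only [h, Finset.sum_add_distrib]
  exact add_le_add (eVariationOn.sum_le hu us) (eVariationOn.sum_le hu us)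

/-- the graph of a Lipschitz map over an LNE set is LNE in the product
with the sum distance (the `L¹` product metric). -/
theorem graph_of_lipschitz_isLNE {M P : Type*} [MetricSpace M] [MetricSpace P]
    (S : Set M) (hS : IsLNE S) (F : M → P) (K : ℝ) (hK : 0 ≤ K)
    (hF : ∀ x ∈ S, ∀ y ∈ S, dist (F x) (F y) ≤ K * dist x y) :
    IsLNE {q : WithLp 1 (M × P) |
      (WithLp.equiv 1 (M × P) q).1 ∈ S ∧
      (WithLp.equiv 1 (M × P) q).2 = F (WithLp.equiv 1 (M × P) q).1} := by
  obtain ⟨L, hL1, hL⟩ := hS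
  set G : Set (WithLp 1 (M × P)) := {q : WithLp 1 (M × P) |
      (WithLp.equiv 1 (M × P) q).1 ∈ S ∧
      (WithLp.equiv 1 (M × P) q).2 = F (WithLp.equiv 1 (M × P) q).1} with hG
  have hFLip : LipschitzOnWith K.toNNReal F S := by
    apply LipschitzOnWith.of_dist_le_mul
    intro x hx y hy
    simpa [Real.coe_toNNReal K hK] using hF x hx y hy
  refine ⟨L * (1 + K), (by nlinarith), ?_⟩
  intro X hX Y hY
  obtain ⟨hX1, hX2⟩ := hX
  obtain ⟨hY1, hY2⟩ := hY
  set x := (WithLp.equiv 1 (M × P) X).1 with hx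
  set y := (WithLp.equiv 1 (M × P) Y).1 with hy
  set c : ENNReal := 1 + ENNReal.ofReal K with hc
  have hc0 : c ≠ 0 := by simp [hc]
  have hctop : c ≠ ⊤ := by simp [hc]
  -- main step: innerDist G X Y ≤ c * innerDist S x y
  have key : innerDist G X Y ≤ c * innerDist S x y := by
    conv_rhs => rw [innerDist, sInf_eq_iInf]
    simp only [iInf_subtype']
    rw [ENNReal.mul_iInf_of_ne hc0 hctop]
    apply le_iInf
    rintro ⟨l, γ, hγc, hγm, hγ0, hγ1, rfl⟩
    -- the lifted path
    set Γ : ℝ → WithLp 1 (M × P) := fun t => (WithLp.equiv 1 (M × P)).symm (γ t, F (γ t))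
      with hΓ
    have hΓc : ContinuousOn Γ (Set.Icc 0 1) := by
      apply (WithLp.prod_continuous_toLp 1 M P).comp_continuousOn
      exact hγc.prodMk ((hFLip.continuousOn).comp hγc hγm)
    have hΓm : Set.MapsTo Γ (Set.Icc 0 1) G := by
      intro t ht
      refine ⟨?_, ?_⟩ <;> simp [hΓ, hγm ht]
    have hΓ0 : Γ 0 = X := by
      apply (WithLp.equiv 1 (M × P)).injective
      have : F x = (WithLp.equiv 1 (M × P) X).2 := hX2.symm
      rw [show (WithLp.equiv 1 (M × P)) (Γ 0) = (γ 0, F (γ 0)) by simp [hΓ], hγ0]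
      exact Prod.ext hx this
    have hΓ1 : Γ 1 = Y := by
      apply (WithLp.equiv 1 (M × P)).injective
      have : F y = (WithLp.equiv 1 (M × P) Y).2 := hY2.symm
      rw [show (WithLp.equiv 1 (M × P)) (Γ 1) = (γ 1, F (γ 1)) by simp [hΓ], hγ1]
      exact Prod.ext hy this
    have hlen : pathLength Γ ≤ c * pathLength γ := by
      calc pathLength Γ ≤ eVariationOn γ (Set.Icc 0 1)
              + eVariationOn (F ∘ γ) (Set.Icc 0 1) :=
            eVariationOn_prodL1_le γ (fun t => F (γ t)) (Set.Icc 0 1)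
        _ ≤ eVariationOn γ (Set.Icc 0 1)
              + (K.toNNReal : ENNReal) * eVariationOn γ (Set.Icc 0 1) :=
            add_le_add le_rfl (hFLip.comp_eVariationOn_le hγm)
        _ = c * pathLength γ := by
            rw [hc, pathLength, add_mul, one_mul]
            congr 1
    have hmem : pathLength Γ ∈ {l : ENNReal | ∃ δ : ℝ → WithLp 1 (M × P),
        ContinuousOn δ (Set.Icc 0 1) ∧ Set.MapsTo δ (Set.Icc 0 1) G ∧
        δ 0 = X ∧ δ 1 = Y ∧ l = pathLength δ} := ⟨Γ, hΓc, hΓm, hΓ0, hΓ1, rfl⟩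
    exact (sInf_le hmem).trans hlen
  refine key.trans ?_
  calc c * innerDist S x y ≤ c * ENNReal.ofReal (L * dist x y) :=
        mul_le_mul_right (hL hX1 hY1) c
    _ = ENNReal.ofReal ((1 + K) * (L * dist x y)) := by
        rw [hc, ← ENNReal.ofReal_one, ← ENNReal.ofReal_add zero_le_one hK,
          ← ENNReal.ofReal_mul (by linarith)]
    _ ≤ ENNReal.ofReal (L * (1 + K) * dist X Y) := by
        apply ENNReal.ofReal_le_ofReal
        have hdd : dist x y ≤ dist X Y := by
          have h2 : dist X Y = dist X.fst Y.fst + dist X.snd Y.snd := by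
            rw [WithLp.prod_dist_eq_add (by norm_num) X Y]
            norm_num
          rw [h2]
          exact le_add_of_nonneg_right dist_nonneg
        have h1 : (0:ℝ) ≤ (1 + K) * L := by positivity -- needs L ≥ 0
        nlinarith [dist_nonneg (x := x) (y := y), dist_nonneg (x := X) (y := Y)]
end

section
/- Let x_j and x_k be nonzero vectors in a real inner product space with norms r_j, r_k, and let 2α ∈ [0,π] be the angle between them. Then (r_j + r_k) sin α ≤ |x_j − x_k| ≤ r_j + r_k. -/
open Set Metric

/-- (|x|+|y|) sin α ≤ |x−y| ≤ |x|+|y| where 2α is the angle between x and y. -/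
theorem norm_sub_bounds_angle {E : Type*} [NormedAddCommGroup E] [InnerProductSpace ℝ E]
    (x y : E) (hx : x ≠ 0) (hy : y ≠ 0) :
    (‖x‖ + ‖y‖) * Real.sin (InnerProductGeometry.angle x y / 2) ≤ ‖x - y‖ ∧
      ‖x - y‖ ≤ ‖x‖ + ‖y‖ := by
  refine ⟨?_, norm_sub_le x y⟩
  set θ := InnerProductGeometry.angle x y with hθ
  have hθ0 : 0 ≤ θ := InnerProductGeometry.angle_nonneg x y
  have hθπ : θ ≤ Real.pi := InnerProductGeometry.angle_le_pi x y
  have hsin : 0 ≤ Real.sin (θ / 2) := Real.sin_nonneg_of_nonneg_of_le_pi (by linarith) (by linarith)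
  have hc : Real.cos θ ≤ 1 := Real.cos_le_one θ
  have hc' : -1 ≤ Real.cos θ := Real.neg_one_le_cos θ
  have hsinsq : Real.sin (θ / 2) ^ 2 = (1 - Real.cos θ) / 2 := by
    rw [Real.sin_half_eq_sqrt hθ0 (by linarith [Real.pi_pos]),
      Real.sq_sqrt (by linarith : (0:ℝ) ≤ (1 - Real.cos θ) / 2)]
  have hnx : (0:ℝ) < ‖x‖ := norm_pos_iff.mpr hx
  have hny : (0:ℝ) < ‖y‖ := norm_pos_iff.mpr hy
  have hinner : (inner ℝ x y : ℝ) = Real.cos θ * ‖x‖ * ‖y‖ := by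
    rw [hθ, InnerProductGeometry.cos_angle]
    field_simp
  have hsq : ‖x - y‖ ^ 2 = ‖x‖ ^ 2 - 2 * (Real.cos θ * ‖x‖ * ‖y‖) + ‖y‖ ^ 2 := by
    rw [← hinner]
    exact norm_sub_sq_real x y
  have key : ((‖x‖ + ‖y‖) * Real.sin (θ / 2)) ^ 2 ≤ ‖x - y‖ ^ 2 := by
    rw [mul_pow, hsinsq, hsq]
    nlinarith [mul_nonneg (by linarith : (0:ℝ) ≤ 1 + Real.cos θ) (sq_nonneg (‖x‖ - ‖y‖))]
  have hlhs : 0 ≤ (‖x‖ + ‖y‖) * Real.sin (θ / 2) := mul_nonneg (by linarith) hsin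
  exact (pow_le_pow_iff_left₀ hlhs (norm_nonneg _) two_ne_zero).mp key
end

section
/- Let x_j, x_k be nonzero vectors in a real inner product space with r_j = |x_j|, r_k = |x_k|, and suppose |x_j/r_j − x_k/r_k| ≥ δ/2 for some δ ∈ (0,2]. Then (δ/4)·(r_j + r_k) ≤ |x_j − x_k|; in particular |x_j| ≤ (4/δ)·|x_j − x_k| and |x_k| ≤ (4/δ)·|x_j − x_k|. -/
open Set Metric

/-- if the normalizations of x and y are at distance at least δ/2,
then (δ/4)(|x|+|y|) ≤ |x−y|, and in particular |x|,|y| ≤ (4/δ)|x−y|. -/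
theorem norm_sub_of_normalized_far {E : Type*} [NormedAddCommGroup E]
    [InnerProductSpace ℝ E] (x y : E) (hx : x ≠ 0) (hy : y ≠ 0)
    (δ : ℝ) (hδ0 : 0 < δ) (hδ2 : δ ≤ 2)
    (h : δ / 2 ≤ ‖‖x‖⁻¹ • x - ‖y‖⁻¹ • y‖) :
    δ / 4 * (‖x‖ + ‖y‖) ≤ ‖x - y‖ ∧
      ‖x‖ ≤ 4 / δ * ‖x - y‖ ∧ ‖y‖ ≤ 4 / δ * ‖x - y‖ := by
  have ha : (0:ℝ) < ‖x‖ := norm_pos_iff.mpr hx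
  have hb : (0:ℝ) < ‖y‖ := norm_pos_iff.mpr hy
  set a := ‖x‖ with hadef
  set b := ‖y‖ with hbdef
  set t : ℝ := inner ℝ x y with htdef
  have hux : ‖a⁻¹ • x‖ = 1 := by
    rw [norm_smul]; simp [abs_of_pos (inv_pos.mpr ha), hadef]
    field_simp
  have huy : ‖b⁻¹ • y‖ = 1 := by
    rw [norm_smul]; simp [abs_of_pos (inv_pos.mpr hb), hbdef]
    field_simp
  have hsq : ‖a⁻¹ • x - b⁻¹ • y‖ ^ 2 = 2 - 2 * (a⁻¹ * b⁻¹ * t) := by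
    rw [@norm_sub_sq_real, hux, huy, real_inner_smul_left, real_inner_smul_right]
    ring_nf
    rw [htdef]
  have h2 : (δ / 2) ^ 2 ≤ 2 - 2 * (a⁻¹ * b⁻¹ * t) := by
    rw [← hsq]
    exact pow_le_pow_left₀ (by positivity) h 2
  have ht : t ≤ a * b * (1 - δ ^ 2 / 8) := by
    have := mul_le_mul_of_nonneg_left h2 (le_of_lt (mul_pos ha hb))
    have h3 : a * b * (a⁻¹ * b⁻¹ * t) = t := by field_simp
    nlinarith [mul_pos ha hb]
  have hxy : ‖x - y‖ ^ 2 = a ^ 2 - 2 * t + b ^ 2 := by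
    rw [@norm_sub_sq_real]
  have key : δ / 4 * (a + b) ≤ ‖x - y‖ := by
    have hsq2 : (δ / 4 * (a + b)) ^ 2 ≤ ‖x - y‖ ^ 2 := by
      rw [hxy]
      nlinarith [sq_nonneg (a - b), mul_pos ha hb,
        mul_nonneg (by nlinarith : (0:ℝ) ≤ 16 - δ ^ 2) (sq_nonneg (a - b))]
    have h1 : 0 ≤ δ / 4 * (a + b) := by positivity
    nlinarith [norm_nonneg (x - y)]
  refine ⟨key, ?_, ?_⟩
  · have : δ / 4 * a ≤ ‖x - y‖ := le_trans (by nlinarith) key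
    rw [div_mul_eq_mul_div, le_div_iff₀ hδ0]
    nlinarith
  · have : δ / 4 * b ≤ ‖x - y‖ := le_trans (by nlinarith) key
    rw [div_mul_eq_mul_div, le_div_iff₀ hδ0]
    nlinarith
end

section
/- Let N₁, ..., N_s be C¹ submanifold germs of ℝ^n at the origin of positive dimension and codimension, each realized near 0 as the graph of a C¹ map G_j : T_j ∩ B → T_j^⊥ with G_j(0)=0 and DG_j(0)=0, where T_j is the tangent space of N_j at 0. Suppose their union Y has an isolated singularity at 0 (the N_j are pairwise disjoint away from 0 near 0). If there exist indices j ≠ k with T_j ∩ T_k ≠ {0}, then Y is not locally LNE at 0: for every neighbourhood U of 0, the set Y ∩ U is not LNE. -/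
open Set Metric

lemma aux_norm_le_of_orth {E : Type*} [NormedAddCommGroup E] [InnerProductSpace ℝ E]
    (V : Submodule ℝ E) {a b : E} (ha : a ∈ V) (hb : b ∈ Vᗮ) : ‖a‖ ≤ ‖a + b‖ := by
  have h : @inner ℝ E _ a b = 0 := (Submodule.mem_orthogonal V b).mp hb a ha
  have h2 : ‖a + b‖^2 = ‖a‖^2 + ‖b‖^2 := by
    rw [norm_add_sq_real, h]; ring
  nlinarith [norm_nonneg (a+b), norm_nonneg a, norm_nonneg b]

set_option maxHeartbeats 2000000 in
/-- a union of C¹ graph germs with an isolated singularity at the origin,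
two of whose tangent spaces intersect nontrivially, is not locally LNE at 0. -/
theorem not_locallyLNE_of_tangent_intersect {n s : ℕ}
    (T : Fin s → Submodule ℝ (EuclideanSpace ℝ (Fin n)))
    (hTdim : ∀ j, T j ≠ ⊥ ∧ T j ≠ ⊤)
    (r : ℝ) (hr : 0 < r)
    (G : Fin s → EuclideanSpace ℝ (Fin n) → EuclideanSpace ℝ (Fin n))
    (hGsmooth : ∀ j, ContDiff ℝ 1 (G j))
    (hGperp : ∀ j t, G j t ∈ (T j)ᗮ)
    (hG0 : ∀ j, G j 0 = 0)
    (hDG0 : ∀ j, fderiv ℝ (G j) 0 = 0)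
    (N : Fin s → Set (EuclideanSpace ℝ (Fin n)))
    (hN : ∀ j, N j = (fun t => t + G j t) '' ((T j : Set (EuclideanSpace ℝ (Fin n))) ∩ Metric.ball 0 r))
    (hiso : ∀ j k, j ≠ k → N j ∩ N k ⊆ {0})
    (Y : Set (EuclideanSpace ℝ (Fin n))) (hY : Y = ⋃ j, N j)
    (hjk : ∃ j k, j ≠ k ∧ T j ⊓ T k ≠ ⊥) :
    ∀ U : Set (EuclideanSpace ℝ (Fin n)), IsOpen U →
      (0 : EuclideanSpace ℝ (Fin n)) ∈ U → ¬ IsLNE (Y ∩ U) := by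
  intro U hUopen hU0 hLNE
  obtain ⟨L, hL1, hLip⟩ := hLNE
  have hL0 : (0:ℝ) < L := lt_of_lt_of_le one_pos hL1
  obtain ⟨j, k, hjkne, hvne⟩ := hjk
  obtain ⟨v, hv, hv0⟩ := Submodule.exists_mem_ne_zero_of_ne_bot hvne
  -- unit vector in T j ⊓ T k
  set w : EuclideanSpace ℝ (Fin n) := ‖v‖⁻¹ • v with hw_def
  have hwnorm : ‖w‖ = 1 := norm_smul_inv_norm hv0
  have hwj : w ∈ T j := (T j).smul_mem _ (Submodule.mem_inf.mp hv).1
  have hwk : w ∈ T k := (T k).smul_mem _ (Submodule.mem_inf.mp hv).2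
  -- orthogonality norm estimate
  have hnorm : ∀ (m : Fin s) (a b : EuclideanSpace ℝ (Fin n)),
      a ∈ T m → b ∈ (T m)ᗮ → ‖a‖ ≤ ‖a + b‖ :=
    fun m a b ha hb => aux_norm_le_of_orth (T m) ha hb
  -- little-o estimate
  have hlo : ∀ (m : Fin s), ∀ ε : ℝ, 0 < ε → ∃ δ > 0, ∀ x : EuclideanSpace ℝ (Fin n),
      ‖x‖ < δ → ‖G m x‖ ≤ ε * ‖x‖ := by
    intro m ε hε
    have hd : HasFDerivAt (G m) (0 : EuclideanSpace ℝ (Fin n) →L[ℝ] EuclideanSpace ℝ (Fin n)) 0 := by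
      have hdiff : DifferentiableAt ℝ (G m) 0 :=
        ((hGsmooth m).differentiable one_ne_zero).differentiableAt
      have := hdiff.hasFDerivAt
      rwa [hDG0 m] at this
    have hlo2 : (fun h : EuclideanSpace ℝ (Fin n) => G m h) =o[nhds 0] fun h => h := by
      have := hasFDerivAt_iff_isLittleO_nhds_zero.mp hd
      simpa [hG0 m] using this
    have hev := hlo2.def hε
    rw [Metric.eventually_nhds_iff] at hev
    obtain ⟨δ, hδ, hball⟩ := hev
    exact ⟨δ, hδ, fun x hx => by
      have := hball (show dist x 0 < δ by rwa [dist_zero_right])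
      simpa using this⟩
  -- pick δU with ball 0 δU ⊆ U
  obtain ⟨δU, hδU, hballU⟩ := Metric.isOpen_iff.mp hUopen 0 hU0
  set ρ : ℝ := min δU r / 2 with hρ_def
  have hρ0 : 0 < ρ := by positivity
  have hρr : ρ < r := by
    have : min δU r ≤ r := min_le_right _ _
    simp only [hρ_def]; linarith
  have hρδ : ρ < δU := by
    have : min δU r ≤ δU := min_le_left _ _
    simp only [hρ_def]; linarith
  set ε : ℝ := min 1 (1/(4*L)) with hε_def
  have hε0 : 0 < ε := lt_min one_pos (by positivity)
  have hε1 : ε ≤ 1 := min_le_left _ _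
  have hεL : ε ≤ 1/(4*L) := min_le_right _ _
  obtain ⟨δ1, hδ1, hGj⟩ := hlo j ε hε0
  obtain ⟨δ2, hδ2, hGk⟩ := hlo k ε hε0
  set t : ℝ := min (min δ1 δ2) (ρ/2) / 2 with ht_def
  have ht0 : 0 < t := by positivity
  have htδ1 : t < δ1 := by
    have h1 : min (min δ1 δ2) (ρ/2) ≤ min δ1 δ2 := min_le_left _ _
    have h2 : min δ1 δ2 ≤ δ1 := min_le_left _ _
    have h3 : 0 < min (min δ1 δ2) (ρ/2) := by positivity
    simp only [ht_def]; linarith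
  have htδ2 : t < δ2 := by
    have h1 : min (min δ1 δ2) (ρ/2) ≤ min δ1 δ2 := min_le_left _ _
    have h2 : min δ1 δ2 ≤ δ2 := min_le_right _ _
    have h3 : 0 < min (min δ1 δ2) (ρ/2) := by positivity
    simp only [ht_def]; linarith
  have htρ : t ≤ ρ/4 := by
    have h1 : min (min δ1 δ2) (ρ/2) ≤ ρ/2 := min_le_right _ _
    simp only [ht_def]; linarith
  have htr : t < r := by linarith
  -- the two points
  set a : EuclideanSpace ℝ (Fin n) := t • w with ha_def
  have hanorm : ‖a‖ = t := by
    rw [ha_def, norm_smul, hwnorm, Real.norm_eq_abs, abs_of_pos ht0, mul_one]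
  have haj : a ∈ T j := (T j).smul_mem _ hwj
  have hak : a ∈ T k := (T k).smul_mem _ hwk
  set p : EuclideanSpace ℝ (Fin n) := a + G j a with hp_def
  set q : EuclideanSpace ℝ (Fin n) := a + G k a with hq_def
  have hGja : ‖G j a‖ ≤ ε * t := by
    have := hGj a (by rw [hanorm]; exact htδ1)
    rwa [hanorm] at this
  have hGka : ‖G k a‖ ≤ ε * t := by
    have := hGk a (by rw [hanorm]; exact htδ2)
    rwa [hanorm] at this
  have hpN : p ∈ N j := by
    rw [hN j]
    exact ⟨a, ⟨haj, by simpa [mem_ball, dist_zero_right, hanorm] using htr⟩, rfl⟩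
  have hqN : q ∈ N k := by
    rw [hN k]
    exact ⟨a, ⟨hak, by simpa [mem_ball, dist_zero_right, hanorm] using htr⟩, rfl⟩
  have hpnorm_le : ‖p‖ ≤ 2 * t := by
    calc ‖p‖ ≤ ‖a‖ + ‖G j a‖ := norm_add_le _ _
    _ ≤ t + ε * t := by rw [hanorm]; linarith
    _ ≤ 2 * t := by nlinarith
  have hqnorm_le : ‖q‖ ≤ 2 * t := by
    calc ‖q‖ ≤ ‖a‖ + ‖G k a‖ := norm_add_le _ _
    _ ≤ t + ε * t := by rw [hanorm]; linarith
    _ ≤ 2 * t := by nlinarith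
  have hpnorm_ge : t ≤ ‖p‖ := by
    have := hnorm j a (G j a) haj (hGperp j a)
    rwa [hanorm] at this
  have hqnorm_ge : t ≤ ‖q‖ := by
    have := hnorm k a (G k a) hak (hGperp k a)
    rwa [hanorm] at this
  have hNY : ∀ m, N m ⊆ Y := by intro m; rw [hY]; exact subset_iUnion N m
  have hpYU : p ∈ Y ∩ U := ⟨hNY j hpN, hballU (by
    simp only [mem_ball, dist_zero_right]; linarith)⟩
  have hqYU : q ∈ Y ∩ U := ⟨hNY k hqN, hballU (by
    simp only [mem_ball, dist_zero_right]; linarith)⟩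
  -- the compact pieces
  set K : Fin s → Set (EuclideanSpace ℝ (Fin n)) := fun m =>
    (fun x => x + G m x) '' ((T m : Set (EuclideanSpace ℝ (Fin n))) ∩ Metric.closedBall 0 ρ)
    with hK_def
  have hKclosed : ∀ m, IsClosed (K m) := by
    intro m
    have hcpt : IsCompact ((T m : Set (EuclideanSpace ℝ (Fin n))) ∩ Metric.closedBall 0 ρ) :=
      (isCompact_closedBall (0 : EuclideanSpace ℝ (Fin n)) ρ).of_isClosed_subset
        ((Submodule.closed_of_finiteDimensional (T m)).inter Metric.isClosed_closedBall) inter_subset_right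
    exact (hcpt.image (continuous_id.add (hGsmooth m).continuous)).isClosed
  have hKN : ∀ m, K m ⊆ N m := by
    intro m
    rw [hN m]
    exact image_mono (inter_subset_inter_right _ (closedBall_subset_ball hρr))
  have hpK : p ∈ K j := ⟨a, ⟨haj, by
    simp only [mem_closedBall, dist_zero_right, hanorm]; linarith⟩, rfl⟩
  have hqK : q ∈ K k := ⟨a, ⟨hak, by
    simp only [mem_closedBall, dist_zero_right, hanorm]; linarith⟩, rfl⟩
  -- points of Y with norm < ρ lie in some K m
  have hcover : ∀ x ∈ Y, ‖x‖ < ρ → ∃ m, x ∈ K m := by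
    intro x hx hxρ
    rw [hY, mem_iUnion] at hx
    obtain ⟨m, hm⟩ := hx
    rw [hN m] at hm
    obtain ⟨b, ⟨hbT, _⟩, rfl⟩ := hm
    refine ⟨m, b, ⟨hbT, ?_⟩, rfl⟩
    have hb : ‖b‖ ≤ ‖b + G m b‖ := hnorm m b (G m b) hbT (hGperp m b)
    simp only [mem_closedBall, dist_zero_right]
    exact le_of_lt (lt_of_le_of_lt hb hxρ)
  -- lower bound on the inner distance
  have hlow : ENNReal.ofReal t ≤ innerDist (Y ∩ U) p q := by
    apply le_sInf
    rintro l ⟨γ, hγc, hγm, hγ0, hγ1, rfl⟩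
    by_cases h0 : ∃ u ∈ Icc (0:ℝ) 1, γ u = 0
    · obtain ⟨u, hu, hγu⟩ := h0
      calc ENNReal.ofReal t ≤ edist (γ 0) (γ u) := by
            rw [hγ0, hγu, edist_dist, dist_zero_right]
            exact ENNReal.ofReal_le_ofReal hpnorm_ge
        _ ≤ pathLength γ := eVariationOn.edist_le γ (left_mem_Icc.mpr zero_le_one) hu
    by_cases hout : ∃ u ∈ Icc (0:ℝ) 1, ρ ≤ ‖γ u‖
    · obtain ⟨u, hu, hγu⟩ := hout
      calc ENNReal.ofReal t ≤ edist (γ 0) (γ u) := by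
            rw [edist_dist]
            apply ENNReal.ofReal_le_ofReal
            have h1 : ‖γ u‖ - ‖γ 0‖ ≤ ‖γ 0 - γ u‖ := by
              have := norm_sub_norm_le (γ u) (γ 0)
              rw [norm_sub_rev] at this
              linarith
            have h2 : ‖γ 0‖ ≤ 2 * t := by rw [hγ0]; exact hpnorm_le
            rw [dist_eq_norm]
            linarith
        _ ≤ pathLength γ := eVariationOn.edist_le γ (left_mem_Icc.mpr zero_le_one) hu
    -- contradiction case
    exfalso
    push_neg at h0 hout
    set sImg : Set (EuclideanSpace ℝ (Fin n)) := γ '' Icc 0 1 with hsImg_def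
    have hsconn : IsPreconnected sImg := isPreconnected_Icc.image γ hγc
    have hImgK : ∀ x ∈ sImg, ∃ m, x ∈ K m := by
      rintro x ⟨u, hu, rfl⟩
      exact hcover (γ u) (hγm hu).1 (hout u hu)
    have hImgne : ∀ x ∈ sImg, x ≠ (0 : EuclideanSpace ℝ (Fin n)) := by
      rintro x ⟨u, hu, rfl⟩
      exact h0 u hu
    set D : Set (EuclideanSpace ℝ (Fin n)) := ⋃ m : {m : Fin s // m ≠ j}, K m with hD_def
    have hDclosed : IsClosed D := isClosed_iUnion_of_finite (fun m : {m : Fin s // m ≠ j} => hKclosed m)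
    have hKD : ∀ m : Fin s, m ≠ j → K m ⊆ D := by
      intro m hm
      exact subset_iUnion (fun m' : {m' : Fin s // m' ≠ j} => K m') ⟨m, hm⟩
    -- apply preconnectedness
    have hsub : sImg ⊆ Dᶜ ∪ (K j)ᶜ := by
      intro x hx
      by_cases hxD : x ∈ D
      · right
        intro hxKj
        obtain ⟨m, hxm⟩ := mem_iUnion.mp hxD
        have hx2 : x ∈ N j ∩ N m.1 := ⟨hKN j hxKj, hKN m.1 hxm⟩
        exact hImgne x hx (hiso j m.1 (Ne.symm m.2) hx2)
      · left; exact hxD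
    have hp_s : p ∈ sImg := ⟨0, left_mem_Icc.mpr zero_le_one, hγ0⟩
    have hq_s : q ∈ sImg := ⟨1, right_mem_Icc.mpr zero_le_one, hγ1⟩
    have hne1 : (sImg ∩ Dᶜ).Nonempty := by
      refine ⟨p, hp_s, ?_⟩
      intro hpD
      obtain ⟨m, hpm⟩ := mem_iUnion.mp hpD
      have hp2 : p ∈ N j ∩ N m.1 := ⟨hpN, hKN m.1 hpm⟩
      have : p = 0 := hiso j m.1 (Ne.symm m.2) hp2
      rw [this] at hpnorm_ge
      simp at hpnorm_ge
      linarith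
    have hne2 : (sImg ∩ (K j)ᶜ).Nonempty := by
      refine ⟨q, hq_s, ?_⟩
      intro hqKj
      have hq2 : q ∈ N j ∩ N k := ⟨hKN j hqKj, hqN⟩
      have : q = 0 := hiso j k hjkne hq2
      rw [this] at hqnorm_ge
      simp at hqnorm_ge
      linarith
    obtain ⟨x, hxs, hxD, hxKj⟩ := hsconn Dᶜ (K j)ᶜ hDclosed.isOpen_compl
      (hKclosed j).isOpen_compl hsub hne1 hne2
    obtain ⟨m, hxm⟩ := hImgK x hxs
    by_cases hmj : m = j
    · exact hxKj (hmj ▸ hxm)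
    · exact hxD (hKD m hmj hxm)
  -- upper bound from LNE
  have hub := hLip hpYU hqYU
  have hdist : dist p q ≤ 2 * ε * t := by
    rw [dist_eq_norm]
    have : p - q = G j a - G k a := by
      simp only [hp_def, hq_def]
      abel
    rw [this]
    calc ‖G j a - G k a‖ ≤ ‖G j a‖ + ‖G k a‖ := norm_sub_le _ _
      _ ≤ 2 * ε * t := by linarith
  have hLd : L * dist p q ≤ t / 2 := by
    have h1 : L * dist p q ≤ L * (2 * ε * t) :=
      mul_le_mul_of_nonneg_left hdist (le_of_lt hL0)
    have h2 : L * (2 * ε * t) ≤ L * (2 * (1/(4*L)) * t) := by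
      apply mul_le_mul_of_nonneg_left _ (le_of_lt hL0)
      nlinarith [mul_le_mul_of_nonneg_right hεL (le_of_lt ht0)]
    have h3 : L * (2 * (1/(4*L)) * t) = t / 2 := by
      field_simp
      ring
    linarith
  have hfinal : ENNReal.ofReal t ≤ ENNReal.ofReal (t/2) := by
    calc ENNReal.ofReal t ≤ innerDist (Y ∩ U) p q := hlow
      _ ≤ ENNReal.ofReal (L * dist p q) := hub
      _ ≤ ENNReal.ofReal (t/2) := ENNReal.ofReal_le_ofReal hLd
  rw [ENNReal.ofReal_le_ofReal_iff (by linarith)] at hfinal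
  linarith
end

section
/- Let N₁, ..., N_s be C¹ submanifold germs of ℝ^n at the origin as graphs over their pairwise transverse tangent spaces T_j (meaning T_j ∩ T_k = {0} for all j ≠ k) of C¹ maps G_j with G_j(0) = 0 and DG_j(0) = 0, and assume the union Y = N₁ ∪ … ∪ N_s has an isolated singularity at 0. Then Y is locally LNE at 0: there exists r > 0 such that Y ∩ closed-ball(0,r) is LNE. -/
open Set Metric
open scoped NNReal ENNReal RealInnerProductSpace

lemma pathLength_le_of_lip {M : Type*} [PseudoEMetricSpace M] (γ : ℝ → M) (K : NNReal)
    (h : LipschitzOnWith K γ (Set.Icc 0 1)) : pathLength γ ≤ (K : ENNReal) := by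
  have h1 : eVariationOn (γ ∘ id) (Set.Icc (0:ℝ) 1) ≤ K * eVariationOn id (Set.Icc (0:ℝ) 1) :=
    h.comp_eVariationOn_le (mapsTo_id _)
  have h2 : eVariationOn (id : ℝ → ℝ) (Set.Icc 0 1) ≤ ENNReal.ofReal (1 - 0) := by
    have := (monotoneOn_id (s := Set.Icc (0:ℝ) 1)).eVariationOn_le
      (left_mem_Icc.2 zero_le_one) (right_mem_Icc.2 zero_le_one)
    simpa [Set.inter_self] using this
  calc pathLength γ = eVariationOn (γ ∘ id) (Set.Icc (0:ℝ) 1) := rfl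
    _ ≤ K * eVariationOn id (Set.Icc (0:ℝ) 1) := h1
    _ ≤ K * ENNReal.ofReal (1 - 0) := by exact mul_le_mul_right h2 _
    _ = K := by norm_num

lemma innerDist_le_pathLength {M : Type*} [PseudoEMetricSpace M] {S : Set M} {x y : M}
    (γ : ℝ → M) (hc : ContinuousOn γ (Set.Icc 0 1)) (hm : Set.MapsTo γ (Set.Icc 0 1) S)
    (h0 : γ 0 = x) (h1 : γ 1 = y) : innerDist S x y ≤ pathLength γ :=
  sInf_le ⟨γ, hc, hm, h0, h1, rfl⟩

lemma innerDist_le_of_lip_path {M : Type*} [PseudoMetricSpace M] {S : Set M} {x y : M}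
    (γ : ℝ → M) (K : ℝ) (hc : ContinuousOn γ (Set.Icc 0 1)) (hm : Set.MapsTo γ (Set.Icc 0 1) S)
    (h0 : γ 0 = x) (h1 : γ 1 = y)
    (hlip : ∀ u ∈ Set.Icc (0:ℝ) 1, ∀ v ∈ Set.Icc (0:ℝ) 1, dist (γ u) (γ v) ≤ K * dist u v) :
    innerDist S x y ≤ ENNReal.ofReal K := by
  have hK : LipschitzOnWith (Real.toNNReal K) γ (Set.Icc 0 1) := by
    apply LipschitzOnWith.of_dist_le_mul
    intro a ha b hb
    refine (hlip a ha b hb).trans ?_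
    gcongr
    exact Real.le_coe_toNNReal K
  calc innerDist S x y ≤ pathLength γ := innerDist_le_pathLength γ hc hm h0 h1
    _ ≤ (Real.toNNReal K : ENNReal) := pathLength_le_of_lip γ _ hK
    _ = ENNReal.ofReal K := rfl

lemma exists_transversality_const {E : Type*} [NormedAddCommGroup E] [NormedSpace ℝ E]
    [FiniteDimensional ℝ E] (U V : Submodule ℝ E) (hU : U ≠ ⊥) (hUV : U ⊓ V = ⊥) :
    ∃ c : ℝ, 0 < c ∧ ∀ a ∈ U, ∀ b ∈ V, c * (‖a‖ + ‖b‖) ≤ ‖a - b‖ := by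
  set K : Set (E × E) := {p | p.1 ∈ U ∧ p.2 ∈ V ∧ ‖p.1‖ + ‖p.2‖ = 1} with hKdef
  have hclosed : IsClosed K := by
    have h1 : IsClosed {p : E × E | p.1 ∈ U} :=
      (Submodule.closed_of_finiteDimensional U).preimage continuous_fst
    have h2 : IsClosed {p : E × E | p.2 ∈ V} :=
      (Submodule.closed_of_finiteDimensional V).preimage continuous_snd
    have h3 : IsClosed {p : E × E | ‖p.1‖ + ‖p.2‖ = 1} :=
      isClosed_eq (by fun_prop) continuous_const
    have : K = ({p : E × E | p.1 ∈ U} ∩ {p : E × E | p.2 ∈ V}) ∩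
        {p : E × E | ‖p.1‖ + ‖p.2‖ = 1} := by
      ext p; simp [hKdef, and_assoc]
    rw [this]; exact (h1.inter h2).inter h3
  have hsub : K ⊆ closedBall (0 : E × E) 1 := by
    rintro ⟨a, b⟩ ⟨-, -, hn⟩
    rw [mem_closedBall, dist_zero_right, Prod.norm_def]
    apply max_le <;> nlinarith [norm_nonneg a, norm_nonneg b]
  have hcomp : IsCompact K :=
    (isCompact_closedBall (0 : E × E) 1).of_isClosed_subset hclosed hsub
  have hne : K.Nonempty := by
    obtain ⟨a₀, ha₀U, ha₀⟩ := Submodule.exists_mem_ne_zero_of_ne_bot hU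
    refine ⟨(‖a₀‖⁻¹ • a₀, 0), U.smul_mem _ ha₀U, V.zero_mem, ?_⟩
    have : ‖a₀‖ ≠ 0 := norm_ne_zero_iff.2 ha₀
    simp [norm_smul, abs_of_nonneg (inv_nonneg.2 (norm_nonneg a₀)), inv_mul_cancel₀ this]
  obtain ⟨p₀, hp₀K, hp₀min⟩ := hcomp.exists_isMinOn hne
    ((continuous_fst.sub continuous_snd).norm.continuousOn)
  refine ⟨‖p₀.1 - p₀.2‖, ?_, ?_⟩
  · rcases hp₀K with ⟨h1, h2, h3⟩
    rcases eq_or_lt_of_le (norm_nonneg (p₀.1 - p₀.2)) with h | h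
    · exfalso
      have heq : p₀.1 = p₀.2 := sub_eq_zero.1 (norm_eq_zero.1 h.symm)
      have : p₀.1 ∈ U ⊓ V := ⟨h1, heq ▸ h2⟩
      rw [hUV] at this
      have h0 : p₀.1 = 0 := by simpa using this
      have h0' : p₀.2 = 0 := heq ▸ h0
      rw [h0, h0'] at h3
      simp at h3
    · exact h
  · intro a ha b hb
    rcases eq_or_lt_of_le (add_nonneg (norm_nonneg a) (norm_nonneg b)) with h | h
    · rw [← h, mul_zero]; exact norm_nonneg _
    · set t : ℝ := ‖a‖ + ‖b‖
      have ht : 0 < t := h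
      have hmem : (t⁻¹ • a, t⁻¹ • b) ∈ K := by
        refine ⟨U.smul_mem _ ha, V.smul_mem _ hb, ?_⟩
        simp only [norm_smul, Real.norm_eq_abs, abs_of_nonneg (inv_nonneg.2 ht.le)]
        field_simp
        rfl
      have hle : ‖p₀.1 - p₀.2‖ ≤ ‖(t⁻¹ • a, t⁻¹ • b).1 - (t⁻¹ • a, t⁻¹ • b).2‖ := hp₀min hmem
      simp only at hle
      have hnorm : ‖t⁻¹ • a - t⁻¹ • b‖ = t⁻¹ * ‖a - b‖ := by
        rw [← smul_sub, norm_smul, Real.norm_eq_abs, abs_of_nonneg (inv_nonneg.2 ht.le)]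
      rw [hnorm] at hle
      calc ‖p₀.1 - p₀.2‖ * t ≤ (t⁻¹ * ‖a - b‖) * t := mul_le_mul_of_nonneg_right hle ht.le
        _ = ‖a - b‖ := by field_simp

lemma scale_alg_aux (A g gl u ε : ℝ) (hA : 0 ≤ A) (hg : g ≤ ε * A)
    (hu0 : 0 ≤ u) (hu1 : u ≤ 1) (hε0 : 0 ≤ ε) (hε : ε ≤ 1/4)
    (hgl0 : 0 ≤ gl) (hgl : gl ≤ g + ε * (u * A)) :
    (1-u)^2 * A^2 + gl^2 ≤ (A^2 + g^2) - u * A^2 / 2 := by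
  have t0 : 0 ≤ u * A^2 := by positivity
  have h1 : gl^2 ≤ (g + ε*(u*A))^2 := by
    apply pow_le_pow_left₀ hgl0 hgl
  have expand : (g + ε*(u*A))^2 = g^2 + 2*(g*(ε*(u*A))) + ε^2*u^2*A^2 := by ring
  have c1 : g*(ε*(u*A)) ≤ ε^2*u*A^2 := by
    nlinarith [mul_le_mul_of_nonneg_right hg (show (0:ℝ) ≤ ε*(u*A) by positivity)]
  have hε2 : ε^2 ≤ 1/16 := by nlinarith
  have hu2 : u^2 ≤ u := by nlinarith
  have c2 : ε^2*u*A^2 ≤ (1/16)*(u*A^2) := by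
    nlinarith [mul_nonneg (show (0:ℝ) ≤ 1/16 - ε^2 by linarith) t0]
  have c3 : ε^2*u^2*A^2 ≤ ε^2*u*A^2 := by
    nlinarith [mul_nonneg (sq_nonneg ε)
      (mul_nonneg (show (0:ℝ) ≤ u - u^2 by linarith) (sq_nonneg A))]
  have c4 : (1-u)^2*A^2 ≤ A^2 - u*A^2 := by
    nlinarith [mul_nonneg (show (0:ℝ) ≤ u - u^2 by linarith) (sq_nonneg A)]
  nlinarith [h1, expand, c1, c2, c3, c4]

lemma scale_alg (A g gl l ε : ℝ) (hA : 0 ≤ A) (hg : g ≤ ε * A)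
    (hl0 : 0 ≤ l) (hl1 : l ≤ 1) (hε0 : 0 ≤ ε) (hε : ε ≤ 1/4)
    (hgl0 : 0 ≤ gl) (hgl : gl ≤ g + ε * ((1 - l) * A)) :
    l^2 * A^2 + gl^2 ≤ (A^2 + g^2) - (1 - l) * A^2 / 2 := by
  have h := scale_alg_aux A g gl (1-l) ε hA hg (by linarith) (by linarith) hε0 hε hgl0 hgl
  have hll : (1 - (1-l))^2 = l^2 := by ring
  rw [hll] at h
  exact h

lemma le_of_sq_le_sq'' (a b : ℝ) (hb : 0 ≤ b) (h : a^2 ≤ b^2) (ha : 0 ≤ a) : a ≤ b := by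
  nlinarith

lemma clip_alg (ρ mD Pseg γn segn : ℝ) (hρ : 0 < ρ) (hmD : 0 ≤ mD) (hmDρ : mD ≤ ρ)
    (hPlow : ρ < Pseg) (hPup : Pseg ≤ ρ + (5/4) * mD)
    (hseg : (4/5) * ρ ≤ segn)
    (hγ : γn^2 ≤ Pseg^2 - (16 * (mD/ρ)) * segn^2 / 2)
    (hγ0 : 0 ≤ γn) : γn ≤ ρ := by
  have hq : 0 ≤ mD / ρ := div_nonneg hmD hρ.le
  have h2 : (128/25) * mD * ρ ≤ (16 * (mD/ρ)) * segn^2 / 2 := by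
    have hseg2 : (16/25) * ρ^2 ≤ segn^2 := by nlinarith
    have h3 : (16 * (mD/ρ)) * ((16/25) * ρ^2) ≤ (16 * (mD/ρ)) * segn^2 :=
      mul_le_mul_of_nonneg_left hseg2 (by positivity)
    have h4 : (16 * (mD/ρ)) * ((16/25) * ρ^2) / 2 = (128/25) * mD * ρ := by
      field_simp; ring
    linarith
  have hfin : γn^2 ≤ ρ^2 := by nlinarith
  exact le_of_sq_le_sq'' _ _ hρ.le hfin hγ0

lemma finset_min_pos {ι : Type*} [Fintype ι] (f : ι → ℝ) (r : ℝ) (hr : 0 < r)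
    (hf : ∀ i, 0 < f i) : ∃ c : ℝ, 0 < c ∧ c ≤ r ∧ ∀ i, c ≤ f i := by
  classical
  set Fs : Finset ℝ := insert r (Finset.image f Finset.univ) with hFs
  have hne : Fs.Nonempty := ⟨r, Finset.mem_insert_self _ _⟩
  refine ⟨Fs.min' hne, ?_, Finset.min'_le _ _ (Finset.mem_insert_self _ _), fun i =>
    Finset.min'_le _ _ (Finset.mem_insert_of_mem (Finset.mem_image_of_mem _ (Finset.mem_univ _)))⟩
  have hmem := Finset.min'_mem Fs hne
  rcases Finset.mem_insert.1 hmem with h | h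
  · rw [h]; exact hr
  · obtain ⟨i, -, hi⟩ := Finset.mem_image.1 h
    rw [← hi]; exact hf i

set_option maxHeartbeats 1000000 in
lemma same_sheet_bound {n : ℕ} (Tj : Submodule ℝ (EuclideanSpace ℝ (Fin n)))
    (Gj : EuclideanSpace ℝ (Fin n) → EuclideanSpace ℝ (Fin n)) (hGc : Continuous Gj)
    (hG0j : Gj 0 = 0)
    (ρ δ0 ε : ℝ) (hρpos : 0 < ρ) (hρδ : ρ ≤ δ0/2) (hεpos : 0 < ε) (hε4 : ε ≤ 1/4)
    (S : Set (EuclideanSpace ℝ (Fin n)))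
    (fact_Pub : ∀ a : EuclideanSpace ℝ (Fin n), ‖a‖ ≤ δ0/2 → ‖a + Gj a‖ ≤ (1+ε) * ‖a‖)
    (fact_Plip_ub : ∀ u v : EuclideanSpace ℝ (Fin n), ‖u‖ ≤ δ0/2 → ‖v‖ ≤ δ0/2 →
      ‖(u + Gj u) - (v + Gj v)‖ ≤ (1+ε) * ‖u - v‖)
    (fact_Plip_lb : ∀ u v : EuclideanSpace ℝ (Fin n), ‖u‖ ≤ δ0/2 → ‖v‖ ≤ δ0/2 →
      (1-ε) * ‖u - v‖ ≤ ‖(u + Gj u) - (v + Gj v)‖)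
    (fact_scale_sq : ∀ a : EuclideanSpace ℝ (Fin n), a ∈ Tj → ‖a‖ ≤ δ0/2 →
      ∀ l : ℝ, 0 ≤ l → l ≤ 1 →
      ‖l • a + Gj (l • a)‖^2 ≤ ‖a + Gj a‖^2 - (1-l) * ‖a‖^2 / 2)
    (point_mem : ∀ c : EuclideanSpace ℝ (Fin n), c ∈ Tj → ‖c‖ ≤ δ0/2 →
      ‖c + Gj c‖ ≤ ρ → c + Gj c ∈ S)
    (a b : EuclideanSpace ℝ (Fin n)) (haT : a ∈ Tj) (hbT : b ∈ Tj)
    (han : ‖a‖ ≤ ρ) (hbn : ‖b‖ ≤ ρ) (hPa : ‖a + Gj a‖ ≤ ρ) (hPb : ‖b + Gj b‖ ≤ ρ) :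
    innerDist S (a + Gj a) (b + Gj b) ≤
      ENNReal.ofReal (30 * dist (a + Gj a) (b + Gj b)) := by
  obtain ⟨D, hDdef⟩ : ∃ d : ℝ, d = ‖b - a‖ := ⟨_, rfl⟩
  have hD0 : 0 ≤ D := hDdef ▸ norm_nonneg _
  have hD2ρ : D ≤ 2*ρ := by
    rw [hDdef]
    have := norm_sub_le b a
    linarith
  obtain ⟨m, hmdef⟩ : ∃ f : ℝ → ℝ, f = fun u => min u (1-u) := ⟨_, rfl⟩
  obtain ⟨lam, hlamdef⟩ : ∃ f : ℝ → ℝ, f = fun u => max 0 (1 - 16*D/ρ * m u) := ⟨_, rfl⟩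
  obtain ⟨seg, hsegdef⟩ : ∃ f : ℝ → EuclideanSpace ℝ (Fin n),
    f = fun u => a + u • (b - a) := ⟨_, rfl⟩
  obtain ⟨γ, hγdef⟩ : ∃ f : ℝ → EuclideanSpace ℝ (Fin n),
      f = fun u => lam u • seg u + Gj (lam u • seg u) := ⟨_, rfl⟩
  have hγapp : ∀ u, γ u = lam u • seg u + Gj (lam u • seg u) := fun u => by rw [hγdef]
  have hmapp : ∀ u, m u = min u (1-u) := fun u => by rw [hmdef]
  have hlamapp : ∀ u, lam u = max 0 (1 - 16*D/ρ * m u) := fun u => by rw [hlamdef]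
  have hsegapp : ∀ u, seg u = a + u • (b - a) := fun u => by rw [hsegdef]
  have hm01 : ∀ u : ℝ, u ∈ Set.Icc (0:ℝ) 1 → 0 ≤ m u ∧ m u ≤ 1/2 := by
    intro u hu
    rw [hmapp]
    constructor
    · exact le_min hu.1 (by linarith [hu.2])
    · rcases le_total u (1-u) with h | h
      · rw [min_eq_left h]; linarith
      · rw [min_eq_right h]; linarith
  have hβ0 : 0 ≤ 16*D/ρ := by positivity
  have hlam01 : ∀ u : ℝ, u ∈ Set.Icc (0:ℝ) 1 → 0 ≤ lam u ∧ lam u ≤ 1 := by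
    intro u hu
    rw [hlamapp]
    refine ⟨le_max_left _ _, max_le (by norm_num) ?_⟩
    have h1 := (hm01 u hu).1
    nlinarith
  have hsegT : ∀ u : ℝ, seg u ∈ Tj := by
    intro u
    rw [hsegapp]
    exact Tj.add_mem haT (Tj.smul_mem _ (Tj.sub_mem hbT haT))
  have hsegn : ∀ u : ℝ, u ∈ Set.Icc (0:ℝ) 1 → ‖seg u‖ ≤ ρ := by
    intro u hu
    have heq : seg u = (1-u) • a + u • b := by rw [hsegapp]; module
    rw [heq]
    calc ‖(1-u) • a + u • b‖ ≤ ‖(1-u) • a‖ + ‖u • b‖ := norm_add_le _ _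
      _ = (1-u)*‖a‖ + u*‖b‖ := by
          rw [norm_smul, norm_smul, Real.norm_eq_abs, Real.norm_eq_abs,
            abs_of_nonneg (by linarith [hu.2] : (0:ℝ) ≤ 1-u), abs_of_nonneg hu.1]
      _ ≤ (1-u)*ρ + u*ρ := by
          have h1 : (0:ℝ) ≤ 1-u := by linarith [hu.2]
          have h2 := mul_le_mul_of_nonneg_left han h1
          have h3 := mul_le_mul_of_nonneg_left hbn hu.1
          linarith
      _ = ρ := by ring
  have hargn : ∀ u : ℝ, u ∈ Set.Icc (0:ℝ) 1 → ‖lam u • seg u‖ ≤ ρ := by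
    intro u hu
    rw [norm_smul, Real.norm_eq_abs, abs_of_nonneg (hlam01 u hu).1]
    nlinarith [(hlam01 u hu).1, (hlam01 u hu).2, norm_nonneg (seg u), hsegn u hu, hρpos]
  have hargδ : ∀ u : ℝ, u ∈ Set.Icc (0:ℝ) 1 → ‖lam u • seg u‖ ≤ δ0/2 :=
    fun u hu => (hargn u hu).trans hρδ
  have hcontain : ∀ u : ℝ, u ∈ Set.Icc (0:ℝ) 1 → ‖γ u‖ ≤ ρ := by
    intro u hu
    obtain ⟨hl0, hl1⟩ := hlam01 u hu
    obtain ⟨hm0, hmhalf⟩ := hm01 u hu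
    rw [hγapp]
    by_cases hlz : lam u = 0
    · rw [hlz, zero_smul, hG0j]
      simpa using hρpos.le
    · have hlameq : lam u = 1 - 16*D/ρ * m u := by
        rcases le_total (1 - 16*D/ρ * m u) 0 with h | h
        · exfalso; apply hlz; rw [hlamapp]; exact max_eq_left h
        · rw [hlamapp]; exact max_eq_right h
      have hsq := fact_scale_sq (seg u) (hsegT u) ((hsegn u hu).trans hρδ) (lam u) hl0 hl1
      by_cases hball : ‖seg u + Gj (seg u)‖ ≤ ρ
      · apply le_of_sq_le_sq'' _ _ hρpos.le _ (norm_nonneg _)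
        have hll : (0:ℝ) ≤ 1 - lam u := by linarith
        have hnn : 0 ≤ (1 - lam u) * ‖seg u‖^2 / 2 := by positivity
        nlinarith [norm_nonneg (seg u + Gj (seg u))]
      · push_neg at hball
        have hPub := fact_Pub (seg u) ((hsegn u hu).trans hρδ)
        have hseglow : (4/5)*ρ ≤ ‖seg u‖ := by nlinarith [norm_nonneg (seg u)]
        have hPup2 : ‖seg u + Gj (seg u)‖ ≤ ρ + (5/4)*(m u * D) := by
          rcases min_cases u (1-u) with ⟨hmeq, hle⟩ | ⟨hmeq, hle⟩
          · have hmu : m u = u := by rw [hmapp]; exact hmeq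
            have hsega : seg u - a = u • (b - a) := by rw [hsegapp]; module
            have hnd : ‖seg u - a‖ = u * D := by
              rw [hsega, norm_smul, Real.norm_eq_abs, abs_of_nonneg hu.1, hDdef]
            have hdist := fact_Plip_ub (seg u) a ((hsegn u hu).trans hρδ) (han.trans hρδ)
            have htri := norm_sub_norm_le (seg u + Gj (seg u)) (a + Gj a)
            rw [hmu]
            have huD : 0 ≤ u * D := mul_nonneg hu.1 hD0
            nlinarith [hdist, htri, hnd, hPa]
          · have hmu : m u = 1-u := by rw [hmapp]; exact hmeq
            have hsegb : seg u - b = (1-u) • (a - b) := by rw [hsegapp]; module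
            have hab : ‖a - b‖ = D := by rw [hDdef, norm_sub_rev]
            have hnd : ‖seg u - b‖ = (1-u) * D := by
              rw [hsegb, norm_smul, Real.norm_eq_abs,
                abs_of_nonneg (by linarith [hu.2] : (0:ℝ) ≤ 1-u), hab]
            have hdist := fact_Plip_ub (seg u) b ((hsegn u hu).trans hρδ) (hbn.trans hρδ)
            have htri := norm_sub_norm_le (seg u + Gj (seg u)) (b + Gj b)
            rw [hmu]
            have huD : 0 ≤ (1-u) * D := mul_nonneg (by linarith [hu.2]) hD0
            nlinarith [hdist, htri, hnd, hPb]
        have hγsq : ‖lam u • seg u + Gj (lam u • seg u)‖^2 ≤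
            ‖seg u + Gj (seg u)‖^2 - (16 * ((m u * D)/ρ)) * ‖seg u‖^2 / 2 := by
          have he : (1 - lam u) * ‖seg u‖^2 / 2 = (16 * ((m u * D)/ρ)) * ‖seg u‖^2 / 2 := by
            rw [hlameq]; ring
          linarith [hsq]
        have hmDρ : m u * D ≤ ρ := by
          nlinarith [mul_le_mul hmhalf hD2ρ hD0 (by norm_num : (0:ℝ) ≤ 1/2)]
        exact clip_alg ρ (m u * D) ‖seg u + Gj (seg u)‖
          ‖lam u • seg u + Gj (lam u • seg u)‖ ‖seg u‖ hρpos
          (mul_nonneg hm0 hD0) hmDρ hball hPup2 hseglow hγsq (norm_nonneg _)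
  have hmaps : Set.MapsTo γ (Set.Icc 0 1) S := by
    intro u hu
    have hmem := point_mem (lam u • seg u) (Tj.smul_mem _ (hsegT u)) (hargδ u hu)
      (by have h := hcontain u hu; rwa [hγapp] at h)
    rw [hγapp]
    exact hmem
  have hmc : Continuous m := by
    rw [hmdef]; exact continuous_id.min (continuous_const.sub continuous_id)
  have hlamc : Continuous lam := by
    rw [hlamdef]
    exact continuous_const.max (continuous_const.sub (continuous_const.mul hmc))
  have hsegc : Continuous seg := by
    rw [hsegdef]; exact continuous_const.add (continuous_id.smul continuous_const)
  have hγc : Continuous γ := by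
    rw [hγdef]
    have h3 : Continuous fun u => lam u • seg u := hlamc.smul hsegc
    exact h3.add (hGc.comp h3)
  have hend0 : γ 0 = a + Gj a := by
    have hm0' : m 0 = 0 := by rw [hmapp]; norm_num
    have hl0' : lam 0 = 1 := by rw [hlamapp, hm0']; norm_num
    have hs0 : seg 0 = a := by rw [hsegapp]; simp
    rw [hγapp, hl0', hs0, one_smul]
  have hend1 : γ 1 = b + Gj b := by
    have hm1 : m 1 = 0 := by rw [hmapp]; norm_num
    have hl1' : lam 1 = 1 := by rw [hlamapp, hm1]; norm_num
    have hs1 : seg 1 = b := by rw [hsegapp, one_smul]; abel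
    rw [hγapp, hl1', hs1, one_smul]
  have hmlip : ∀ u v : ℝ, |m u - m v| ≤ |u - v| := by
    intro u v
    rw [hmapp, hmapp]
    refine (abs_min_sub_min_le_max u (1-u) v (1-v)).trans ?_
    have h2 : |(1-u) - (1-v)| = |u - v| := by
      rw [show (1-u)-(1-v) = -(u-v) by ring, abs_neg]
    rw [h2, max_self]
  have hlamlip : ∀ u v : ℝ, |lam u - lam v| ≤ (16*D/ρ) * |u - v| := by
    intro u v
    rw [hlamapp, hlamapp]
    have h1 : |max 0 (1 - 16*D/ρ * m u) - max 0 (1 - 16*D/ρ * m v)| ≤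
        |(1 - 16*D/ρ * m u) - (1 - 16*D/ρ * m v)| := by
      rw [max_comm 0 (1 - 16*D/ρ * m u), max_comm 0 (1 - 16*D/ρ * m v)]
      exact abs_max_sub_max_le_abs _ _ _
    refine h1.trans ?_
    have h2 : (1 - 16*D/ρ * m u) - (1 - 16*D/ρ * m v) = (16*D/ρ) * (m v - m u) := by ring
    rw [h2, abs_mul, abs_of_nonneg hβ0]
    exact mul_le_mul_of_nonneg_left ((hmlip v u).trans_eq (abs_sub_comm v u)) hβ0
  have hlip : ∀ u ∈ Set.Icc (0:ℝ) 1, ∀ v ∈ Set.Icc (0:ℝ) 1,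
      dist (γ u) (γ v) ≤ (22*D) * dist u v := by
    intro u hu v hv
    rw [dist_eq_norm, Real.dist_eq, hγapp, hγapp]
    have hub := fact_Plip_ub (lam u • seg u) (lam v • seg v) (hargδ u hu) (hargδ v hv)
    have hsplit : lam u • seg u - lam v • seg v
        = (lam u - lam v) • seg u + lam v • (seg u - seg v) := by module
    have hsegd : ‖seg u - seg v‖ = |u - v| * D := by
      have h : seg u - seg v = (u - v) • (b - a) := by rw [hsegapp, hsegapp]; module
      rw [h, norm_smul, Real.norm_eq_abs, hDdef]
    have hb16 : (0:ℝ) ≤ 16*D/ρ * |u - v| := by positivity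
    have h1 : ‖(lam u - lam v) • seg u‖ ≤ (16*D/ρ) * |u - v| * ρ := by
      rw [norm_smul, Real.norm_eq_abs]
      exact mul_le_mul (hlamlip u v) (hsegn u hu) (norm_nonneg _) hb16
    have h2 : ‖lam v • (seg u - seg v)‖ ≤ |u - v| * D := by
      rw [norm_smul, Real.norm_eq_abs, hsegd, abs_of_nonneg (hlam01 v hv).1]
      nlinarith [(hlam01 v hv).1, (hlam01 v hv).2,
        mul_nonneg (abs_nonneg (u-v)) hD0]
    have h3 : ‖lam u • seg u - lam v • seg v‖ ≤ (16*D/ρ) * |u - v| * ρ + |u - v| * D := by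
      rw [hsplit]
      exact (norm_add_le _ _).trans (add_le_add h1 h2)
    have hρne : ρ ≠ 0 := ne_of_gt hρpos
    have h4 : (16*D/ρ) * |u - v| * ρ = 16*D*|u - v| := by field_simp
    rw [h4] at h3
    have h5 : (1+ε) * ‖lam u • seg u - lam v • seg v‖ ≤ 22*D*|u - v| := by
      nlinarith [h3, hε4, hεpos, norm_nonneg (lam u • seg u - lam v • seg v),
        mul_nonneg hD0 (abs_nonneg (u-v))]
    linarith [hub, h5]
  have hID := innerDist_le_of_lip_path γ (22*D) hγc.continuousOn hmaps hend0 hend1 hlip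
  refine hID.trans (ENNReal.ofReal_le_ofReal ?_)
  have hlb := fact_Plip_lb a b (han.trans hρδ) (hbn.trans hρδ)
  rw [dist_eq_norm]
  have hD' : ‖a - b‖ = D := by rw [hDdef, norm_sub_rev]
  rw [hD'] at hlb
  have h34 : (3/4) * D ≤ (1-ε) * D := mul_le_mul_of_nonneg_right (by linarith) hD0
  linarith [hlb, h34]


set_option maxHeartbeats 1000000 in
lemma cross_bound {n : ℕ} (Tj Tk : Submodule ℝ (EuclideanSpace ℝ (Fin n)))
    (Gj Gk : EuclideanSpace ℝ (Fin n) → EuclideanSpace ℝ (Fin n))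
    (hGcj : Continuous Gj) (hGck : Continuous Gk)
    (hG0j : Gj 0 = 0) (hG0k : Gk 0 = 0)
    (ρ δ0 ε : ℝ) (hρpos : 0 < ρ) (hρδ : ρ ≤ δ0/2) (hεpos : 0 < ε) (hε4 : ε ≤ 1/4)
    (S : Set (EuclideanSpace ℝ (Fin n)))
    (fact_Plip_ub_j : ∀ u v : EuclideanSpace ℝ (Fin n), ‖u‖ ≤ δ0/2 → ‖v‖ ≤ δ0/2 →
      ‖(u + Gj u) - (v + Gj v)‖ ≤ (1+ε) * ‖u - v‖)
    (fact_Plip_ub_k : ∀ u v : EuclideanSpace ℝ (Fin n), ‖u‖ ≤ δ0/2 → ‖v‖ ≤ δ0/2 →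
      ‖(u + Gk u) - (v + Gk v)‖ ≤ (1+ε) * ‖u - v‖)
    (fact_scale_norm_j : ∀ a : EuclideanSpace ℝ (Fin n), a ∈ Tj → ‖a‖ ≤ δ0/2 →
      ∀ l : ℝ, 0 ≤ l → l ≤ 1 → ‖l • a + Gj (l • a)‖ ≤ ‖a + Gj a‖)
    (fact_scale_norm_k : ∀ a : EuclideanSpace ℝ (Fin n), a ∈ Tk → ‖a‖ ≤ δ0/2 →
      ∀ l : ℝ, 0 ≤ l → l ≤ 1 → ‖l • a + Gk (l • a)‖ ≤ ‖a + Gk a‖)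
    (point_mem_j : ∀ c : EuclideanSpace ℝ (Fin n), c ∈ Tj → ‖c‖ ≤ δ0/2 →
      ‖c + Gj c‖ ≤ ρ → c + Gj c ∈ S)
    (point_mem_k : ∀ c : EuclideanSpace ℝ (Fin n), c ∈ Tk → ‖c‖ ≤ δ0/2 →
      ‖c + Gk c‖ ≤ ρ → c + Gk c ∈ S)
    (a b : EuclideanSpace ℝ (Fin n)) (haT : a ∈ Tj) (hbT : b ∈ Tk)
    (han : ‖a‖ ≤ ρ) (hbn : ‖b‖ ≤ ρ) (hPa : ‖a + Gj a‖ ≤ ρ) (hPb : ‖b + Gk b‖ ≤ ρ) :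
    innerDist S (a + Gj a) (b + Gk b) ≤ ENNReal.ofReal ((5/2) * (‖a‖ + ‖b‖)) := by
  obtain ⟨ga, hgadef⟩ : ∃ f : ℝ → EuclideanSpace ℝ (Fin n),
      f = fun u => (1-2*u) • a + Gj ((1-2*u) • a) := ⟨_, rfl⟩
  obtain ⟨gb, hgbdef⟩ : ∃ f : ℝ → EuclideanSpace ℝ (Fin n),
      f = fun u => (2*u-1) • b + Gk ((2*u-1) • b) := ⟨_, rfl⟩
  obtain ⟨γ, hγdef⟩ : ∃ f : ℝ → EuclideanSpace ℝ (Fin n),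
      f = fun u => if u ≤ 1/2 then ga u else gb u := ⟨_, rfl⟩
  have hgaapp : ∀ u, ga u = (1-2*u) • a + Gj ((1-2*u) • a) := fun u => by rw [hgadef]
  have hgbapp : ∀ u, gb u = (2*u-1) • b + Gk ((2*u-1) • b) := fun u => by rw [hgbdef]
  have hγapp : ∀ u, γ u = if u ≤ 1/2 then ga u else gb u := fun u => by rw [hγdef]
  have hmid : ga (1/2) = gb (1/2) := by
    rw [hgaapp, hgbapp]
    norm_num [hG0j, hG0k]
  have hγa : ∀ u : ℝ, u ≤ 1/2 → γ u = ga u := by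
    intro u h; rw [hγapp, if_pos h]
  have hγb : ∀ u : ℝ, 1/2 ≤ u → γ u = gb u := by
    intro u h
    rcases lt_or_eq_of_le h with h' | h'
    · rw [hγapp, if_neg (not_le.2 h')]
    · rw [hγapp, ← h', if_pos le_rfl]
      exact hmid
  have hna : ∀ w : ℝ, 0 ≤ w → w ≤ 1 → ‖w • a‖ ≤ δ0/2 := by
    intro w h0 h1
    rw [norm_smul, Real.norm_eq_abs, abs_of_nonneg h0]
    nlinarith [norm_nonneg a]
  have hnb : ∀ w : ℝ, 0 ≤ w → w ≤ 1 → ‖w • b‖ ≤ δ0/2 := by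
    intro w h0 h1
    rw [norm_smul, Real.norm_eq_abs, abs_of_nonneg h0]
    nlinarith [norm_nonneg b]
  have hmapsa : ∀ u : ℝ, 0 ≤ u → u ≤ 1/2 → ga u ∈ S := by
    intro u h0 h2
    rw [hgaapp]
    have hl0 : (0:ℝ) ≤ 1-2*u := by linarith
    have hl1 : (1:ℝ)-2*u ≤ 1 := by linarith
    have hsc := fact_scale_norm_j a haT (han.trans hρδ) (1-2*u) hl0 hl1
    exact point_mem_j ((1-2*u) • a) (Tj.smul_mem _ haT) (hna _ hl0 hl1) (hsc.trans hPa)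
  have hmapsb : ∀ u : ℝ, 1/2 ≤ u → u ≤ 1 → gb u ∈ S := by
    intro u h0 h2
    rw [hgbapp]
    have hl0 : (0:ℝ) ≤ 2*u-1 := by linarith
    have hl1 : (2:ℝ)*u-1 ≤ 1 := by linarith
    have hsc := fact_scale_norm_k b hbT (hbn.trans hρδ) (2*u-1) hl0 hl1
    exact point_mem_k ((2*u-1) • b) (Tk.smul_mem _ hbT) (hnb _ hl0 hl1) (hsc.trans hPb)
  have hmaps : Set.MapsTo γ (Set.Icc 0 1) S := by
    intro u hu
    rcases le_or_gt u (1/2) with h | h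
    · rw [hγa u h]; exact hmapsa u hu.1 h
    · rw [hγb u h.le]; exact hmapsb u h.le hu.2
  have hgac : Continuous ga := by
    rw [hgadef]
    have h : Continuous fun u : ℝ => (1-2*u) • a :=
      (continuous_const.sub (continuous_const.mul continuous_id)).smul continuous_const
    exact h.add (hGcj.comp h)
  have hgbc : Continuous gb := by
    rw [hgbdef]
    have h : Continuous fun u : ℝ => (2*u-1) • b :=
      ((continuous_const.mul continuous_id).sub continuous_const).smul continuous_const
    exact h.add (hGck.comp h)
  have hγc : Continuous γ := by
    rw [hγdef]
    exact Continuous.if_le hgac hgbc continuous_id continuous_const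
      (fun u hu => by rw [hu]; exact hmid)
  have hend0 : γ 0 = a + Gj a := by
    rw [hγa 0 (by norm_num), hgaapp]
    norm_num
  have hend1 : γ 1 = b + Gk b := by
    rw [hγb 1 (by norm_num), hgbapp]
    norm_num
  have hlipa : ∀ u v : ℝ, 0 ≤ u → u ≤ 1/2 → 0 ≤ v → v ≤ 1/2 →
      ‖ga u - ga v‖ ≤ (5/2)*‖a‖*|u - v| := by
    intro u v hu0 hu2 hv0 hv2
    rw [hgaapp, hgaapp]
    have h1 := fact_Plip_ub_j ((1-2*u) • a) ((1-2*v) • a)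
      (hna _ (by linarith) (by linarith)) (hna _ (by linarith) (by linarith))
    have h2 : (1-2*u) • a - (1-2*v) • a = (2*v - 2*u) • a := by module
    rw [h2, norm_smul, Real.norm_eq_abs] at h1
    have h3 : |2*v - 2*u| = 2*|u - v| := by
      rw [show 2*v - 2*u = -(2*(u - v)) by ring, abs_neg, abs_mul]
      norm_num
    rw [h3] at h1
    nlinarith [h1, mul_nonneg (abs_nonneg (u-v)) (norm_nonneg a), hε4]
  have hlipb : ∀ u v : ℝ, 1/2 ≤ u → u ≤ 1 → 1/2 ≤ v → v ≤ 1 →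
      ‖gb u - gb v‖ ≤ (5/2)*‖b‖*|u - v| := by
    intro u v hu0 hu2 hv0 hv2
    rw [hgbapp, hgbapp]
    have h1 := fact_Plip_ub_k ((2*u-1) • b) ((2*v-1) • b)
      (hnb _ (by linarith) (by linarith)) (hnb _ (by linarith) (by linarith))
    have h2 : (2*u-1) • b - (2*v-1) • b = (2*u - 2*v) • b := by module
    rw [h2, norm_smul, Real.norm_eq_abs] at h1
    have h3 : |2*u - 2*v| = 2*|u - v| := by
      rw [show 2*u - 2*v = 2*(u - v) by ring, abs_mul]
      norm_num
    rw [h3] at h1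
    nlinarith [h1, mul_nonneg (abs_nonneg (u-v)) (norm_nonneg b), hε4]
  have main : ∀ u v : ℝ, u ∈ Set.Icc (0:ℝ) 1 → v ∈ Set.Icc (0:ℝ) 1 → u ≤ v →
      ‖γ u - γ v‖ ≤ ((5/2)*(‖a‖+‖b‖)) * (v - u) := by
    intro u v hu hv huv
    rcases le_or_gt v (1/2) with hv2 | hv2
    · rw [hγa u (huv.trans hv2), hγa v hv2]
      have h := hlipa u v hu.1 (huv.trans hv2) hv.1 hv2
      have habs : |u - v| = v - u := by
        rw [abs_sub_comm]; exact abs_of_nonneg (by linarith)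
      rw [habs] at h
      nlinarith [h, norm_nonneg b, sub_nonneg.2 huv]
    · rcases le_or_gt u (1/2) with hu2 | hu2
      · rw [hγa u hu2, hγb v hv2.le]
        have hsplit : ga u - gb v = (ga u - ga (1/2)) + (gb (1/2) - gb v) := by
          rw [hmid]; abel
        have ha1 := hlipa u (1/2) hu.1 hu2 (by norm_num) (by norm_num)
        have hb1 := hlipb (1/2) v (by norm_num) (by norm_num) hv2.le hv.2
        have e1 : |u - 1/2| = 1/2 - u := by
          rw [abs_sub_comm]; exact abs_of_nonneg (by linarith)
        have e2 : |1/2 - v| = v - 1/2 := by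
          rw [abs_sub_comm]; exact abs_of_nonneg (by linarith)
        rw [e1] at ha1
        rw [e2] at hb1
        calc ‖ga u - gb v‖ ≤ ‖ga u - ga (1/2)‖ + ‖gb (1/2) - gb v‖ := by
              rw [hsplit]; exact norm_add_le _ _
          _ ≤ (5/2)*‖a‖*(1/2 - u) + (5/2)*‖b‖*(v - 1/2) := add_le_add ha1 hb1
          _ ≤ ((5/2)*(‖a‖+‖b‖)) * (v - u) := by
              nlinarith [mul_nonneg (norm_nonneg a) (by linarith : (0:ℝ) ≤ v - 1/2),
                mul_nonneg (norm_nonneg b) (by linarith : (0:ℝ) ≤ 1/2 - u)]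
      · rw [hγb u hu2.le, hγb v hv2.le]
        have h := hlipb u v hu2.le hu.2 hv2.le hv.2
        have habs : |u - v| = v - u := by
          rw [abs_sub_comm]; exact abs_of_nonneg (by linarith)
        rw [habs] at h
        nlinarith [h, norm_nonneg a, sub_nonneg.2 huv]
  have hlip : ∀ u ∈ Set.Icc (0:ℝ) 1, ∀ v ∈ Set.Icc (0:ℝ) 1,
      dist (γ u) (γ v) ≤ ((5/2)*(‖a‖+‖b‖)) * dist u v := by
    intro u hu v hv
    rcases le_total u v with h | h
    · rw [dist_eq_norm, Real.dist_eq, abs_of_nonpos (by linarith : u - v ≤ 0)]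
      have heq : ((5/2)*(‖a‖+‖b‖)) * -(u-v) = ((5/2)*(‖a‖+‖b‖)) * (v-u) := by ring
      rw [heq]
      exact main u v hu hv h
    · rw [dist_comm, dist_comm u v, dist_eq_norm, Real.dist_eq,
        abs_of_nonpos (by linarith : v - u ≤ 0)]
      have heq : ((5/2)*(‖a‖+‖b‖)) * -(v-u) = ((5/2)*(‖a‖+‖b‖)) * (u-v) := by ring
      rw [heq]
      exact main v u hv hu h
  exact innerDist_le_of_lip_path γ ((5/2)*(‖a‖+‖b‖)) hγc.continuousOn hmaps hend0 hend1 hlip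

set_option maxHeartbeats 1000000 in
set_option synthInstance.maxHeartbeats 200000 in
/-- a union of C¹ graph germs over pairwise transverse tangent spaces,
with an isolated singularity at the origin, is locally LNE at 0. -/
theorem locallyLNE_of_transverse {n s : ℕ}
    (T : Fin s → Submodule ℝ (EuclideanSpace ℝ (Fin n)))
    (hTdim : ∀ j, T j ≠ ⊥ ∧ T j ≠ ⊤)
    (r : ℝ) (hr : 0 < r)
    (G : Fin s → EuclideanSpace ℝ (Fin n) → EuclideanSpace ℝ (Fin n))
    (hGsmooth : ∀ j, ContDiff ℝ 1 (G j))
    (hGperp : ∀ j t, G j t ∈ (T j)ᗮ)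
    (hG0 : ∀ j, G j 0 = 0)
    (hDG0 : ∀ j, fderiv ℝ (G j) 0 = 0)
    (N : Fin s → Set (EuclideanSpace ℝ (Fin n)))
    (hN : ∀ j, N j = (fun t => t + G j t) '' ((T j : Set (EuclideanSpace ℝ (Fin n))) ∩ Metric.ball 0 r))
    (hiso : ∀ j k, j ≠ k → N j ∩ N k ⊆ {0})
    (Y : Set (EuclideanSpace ℝ (Fin n))) (hY : Y = ⋃ j, N j)
    (htrans : ∀ j k, j ≠ k → T j ⊓ T k = ⊥) :
    ∃ ρ : ℝ, 0 < ρ ∧ IsLNE (Y ∩ Metric.closedBall 0 ρ) := by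
  classical
  -- transversality constant
  have key : ∀ p : Fin s × Fin s, ∃ c : ℝ, 0 < c ∧
      (p.1 ≠ p.2 → ∀ a ∈ T p.1, ∀ b ∈ T p.2, c * (‖a‖ + ‖b‖) ≤ ‖a - b‖) := by
    intro p
    by_cases h : p.1 = p.2
    · exact ⟨1, one_pos, fun hne => absurd h hne⟩
    · obtain ⟨c, hc, hcle⟩ := exists_transversality_const (T p.1) (T p.2) (hTdim p.1).1
        (htrans _ _ h)
      exact ⟨c, hc, fun _ => hcle⟩
  choose cf hcf0 hcf using key
  obtain ⟨cT, hcTpos, hcT1, hcTle⟩ := finset_min_pos cf 1 one_pos hcf0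
  have hcTsep : ∀ j k, j ≠ k → ∀ a ∈ T j, ∀ b ∈ T k, cT * (‖a‖ + ‖b‖) ≤ ‖a - b‖ := by
    intro j k hjk a ha b hb
    have h1 : cT ≤ cf (j, k) := hcTle (j, k)
    have h2 := hcf (j, k) hjk a ha b hb
    nlinarith [norm_nonneg a, norm_nonneg b]
  -- the small constant ε
  obtain ⟨ε, hεdef⟩ : ∃ e : ℝ, e = min (cT/2) (1/4) := ⟨_, rfl⟩
  have hεpos : 0 < ε := by rw [hεdef]; exact lt_min (by positivity) (by norm_num)
  have hε4 : ε ≤ 1/4 := by rw [hεdef]; exact min_le_right _ _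
  have hεc : ε ≤ cT/2 := by rw [hεdef]; exact min_le_left _ _
  -- radius on which each derivative is ≤ ε
  have hδj : ∀ j, ∃ δ > 0, ∀ t : EuclideanSpace ℝ (Fin n), ‖t‖ < δ → ‖fderiv ℝ (G j) t‖ ≤ ε := by
    intro j
    have hc : Continuous (fderiv ℝ (G j)) := (hGsmooth j).continuous_fderiv one_ne_zero
    obtain ⟨δ, hδ0, hδ⟩ := Metric.continuousAt_iff.1 (hc.continuousAt (x := 0)) ε hεpos
    refine ⟨δ, hδ0, fun t ht => ?_⟩
    have h2 := hδ (show dist t 0 < δ by simpa [dist_zero_right] using ht)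
    rw [hDG0 j] at h2
    simpa [dist_zero_right] using h2.le
  choose δf hδf0 hδf using hδj
  obtain ⟨δ0, hδ0pos, hδ0r, hδ0le⟩ := finset_min_pos δf r hr hδf0
  obtain ⟨ρ, hρdef⟩ : ∃ q : ℝ, q = δ0 / 4 := ⟨_, rfl⟩
  have hρpos : 0 < ρ := by rw [hρdef]; positivity
  have hρδ : ρ ≤ δ0 / 2 := by rw [hρdef]; linarith
  have hδ0r2 : δ0 / 2 < r := by linarith
  obtain ⟨S, hSdef⟩ : ∃ S' : Set (EuclideanSpace ℝ (Fin n)), S' = Y ∩ Metric.closedBall 0 ρ :=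
    ⟨_, rfl⟩
  -- basic facts about G on the small ball
  have hGd : ∀ j (t : EuclideanSpace ℝ (Fin n)), DifferentiableAt ℝ (G j) t :=
    fun j t => ((hGsmooth j).differentiable one_ne_zero) t
  have fact_lip : ∀ j (u v : EuclideanSpace ℝ (Fin n)), ‖u‖ ≤ δ0/2 → ‖v‖ ≤ δ0/2 →
      ‖G j u - G j v‖ ≤ ε * ‖u - v‖ := by
    intro j u v hu hv
    have hmem : ∀ w : EuclideanSpace ℝ (Fin n), ‖w‖ ≤ δ0/2 →
        w ∈ Metric.ball (0 : EuclideanSpace ℝ (Fin n)) (δf j) := by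
      intro w hw
      exact mem_ball_zero_iff.2 (lt_of_le_of_lt hw (lt_of_lt_of_le (by linarith) (hδ0le j)))
    exact Convex.norm_image_sub_le_of_norm_fderiv_le
      (fun t _ => hGd j t)
      (fun t ht => hδf j t (mem_ball_zero_iff.1 ht))
      (convex_ball 0 (δf j)) (hmem v hv) (hmem u hu)
  have fact_G0 : ∀ j (u : EuclideanSpace ℝ (Fin n)), ‖u‖ ≤ δ0/2 → ‖G j u‖ ≤ ε * ‖u‖ := by
    intro j u hu
    have h0 : ‖(0 : EuclideanSpace ℝ (Fin n))‖ ≤ δ0/2 := by simp; positivity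
    have := fact_lip j u 0 hu h0
    simpa [hG0 j] using this
  have fact_sq : ∀ j (a : EuclideanSpace ℝ (Fin n)), a ∈ T j →
      ‖a + G j a‖^2 = ‖a‖^2 + ‖G j a‖^2 := by
    intro j a ha
    have h := Submodule.inner_right_of_mem_orthogonal ha (hGperp j a)
    rw [norm_add_sq_real, h]; ring
  have fact_lower : ∀ j (a : EuclideanSpace ℝ (Fin n)), a ∈ T j → ‖a‖ ≤ ‖a + G j a‖ := by
    intro j a ha
    have h := fact_sq j a ha
    exact le_of_sq_le_sq'' _ _ (norm_nonneg _) (by nlinarith [sq_nonneg ‖G j a‖]) (norm_nonneg a)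
  have fact_Pub : ∀ j (a : EuclideanSpace ℝ (Fin n)), ‖a‖ ≤ δ0/2 →
      ‖a + G j a‖ ≤ (1+ε) * ‖a‖ := by
    intro j a ha
    have h1 := norm_add_le a (G j a)
    have h2 := fact_G0 j a ha
    nlinarith [norm_nonneg a]
  have fact_Plip_ub : ∀ j (u v : EuclideanSpace ℝ (Fin n)), ‖u‖ ≤ δ0/2 → ‖v‖ ≤ δ0/2 →
      ‖(u + G j u) - (v + G j v)‖ ≤ (1+ε) * ‖u - v‖ := by
    intro j u v hu hv
    have h1 : (u + G j u) - (v + G j v) = (u - v) + (G j u - G j v) := by abel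
    rw [h1]
    have h2 := norm_add_le (u - v) (G j u - G j v)
    have h3 := fact_lip j u v hu hv
    nlinarith [norm_nonneg (u - v)]
  have fact_Plip_lb : ∀ j (u v : EuclideanSpace ℝ (Fin n)), ‖u‖ ≤ δ0/2 → ‖v‖ ≤ δ0/2 →
      (1-ε) * ‖u - v‖ ≤ ‖(u + G j u) - (v + G j v)‖ := by
    intro j u v hu hv
    have h1 : u - v = ((u + G j u) - (v + G j v)) - (G j u - G j v) := by abel
    have h2 : ‖u - v‖ ≤ ‖(u + G j u) - (v + G j v)‖ + ‖G j u - G j v‖ := by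
      rw [h1]; exact norm_sub_le _ _
    have h3 := fact_lip j u v hu hv
    nlinarith [norm_nonneg (u - v)]
  have fact_scale_sq : ∀ j (a : EuclideanSpace ℝ (Fin n)), a ∈ T j → ‖a‖ ≤ δ0/2 →
      ∀ l : ℝ, 0 ≤ l → l ≤ 1 →
      ‖l • a + G j (l • a)‖^2 ≤ ‖a + G j a‖^2 - (1-l) * ‖a‖^2 / 2 := by
    intro j a ha han l hl0 hl1
    have hla : l • a ∈ T j := (T j).smul_mem _ ha
    have hnla : ‖l • a‖ = l * ‖a‖ := by
      rw [norm_smul, Real.norm_eq_abs, abs_of_nonneg hl0]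
    have hlan : ‖l • a‖ ≤ δ0/2 := by
      rw [hnla]; nlinarith [norm_nonneg a]
    have sq1 := fact_sq j (l • a) hla
    have sq2 := fact_sq j a ha
    have hdiffn : ‖l • a - a‖ = (1-l) * ‖a‖ := by
      have h : l • a - a = (l - 1) • a := by module
      rw [h, norm_smul, Real.norm_eq_abs, abs_of_nonpos (by linarith)]
      ring
    have hdiff : ‖G j (l • a) - G j a‖ ≤ ε * ((1-l) * ‖a‖) := by
      have := fact_lip j (l • a) a hlan han
      rw [hdiffn] at this
      exact this
    have hgl : ‖G j (l • a)‖ ≤ ‖G j a‖ + ε * ((1-l) * ‖a‖) := by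
      have := norm_sub_norm_le (G j (l • a)) (G j a)
      linarith
    have halg := scale_alg ‖a‖ ‖G j a‖ ‖G j (l • a)‖ l ε (norm_nonneg _)
      (fact_G0 j a han) hl0 hl1 hεpos.le hε4 (norm_nonneg _) hgl
    rw [sq1, sq2, hnla]
    nlinarith [halg]
  have fact_scale_norm : ∀ j (a : EuclideanSpace ℝ (Fin n)), a ∈ T j → ‖a‖ ≤ δ0/2 →
      ∀ l : ℝ, 0 ≤ l → l ≤ 1 → ‖l • a + G j (l • a)‖ ≤ ‖a + G j a‖ := by
    intro j a ha han l hl0 hl1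
    have h := fact_scale_sq j a ha han l hl0 hl1
    apply le_of_sq_le_sq'' _ _ (norm_nonneg _) _ (norm_nonneg _)
    nlinarith [mul_nonneg (show (0:ℝ) ≤ 1 - l by linarith) (sq_nonneg ‖a‖)]
  have point_mem : ∀ j (c : EuclideanSpace ℝ (Fin n)), c ∈ T j → ‖c‖ ≤ δ0/2 →
      ‖c + G j c‖ ≤ ρ → c + G j c ∈ S := by
    intro j c hc hcn hP
    rw [hSdef]
    constructor
    · rw [hY]
      exact mem_iUnion.2 ⟨j, by
        rw [hN j]
        exact ⟨c, ⟨hc, mem_ball_zero_iff.2 (lt_of_le_of_lt hcn hδ0r2)⟩, rfl⟩⟩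
    · exact mem_closedBall_zero_iff.2 hP
  have decomp : ∀ j (x : EuclideanSpace ℝ (Fin n)), x ∈ N j → x ∈ Metric.closedBall 0 ρ →
      ∃ a, a ∈ T j ∧ ‖a‖ ≤ ρ ∧ a + G j a = x := by
    intro j x hxj hxball
    rw [hN j] at hxj
    obtain ⟨a, ⟨haT, -⟩, hax⟩ := hxj
    have hax' : a + G j a = x := hax
    refine ⟨a, haT, ?_, hax'⟩
    have h1 : ‖a‖ ≤ ‖a + G j a‖ := fact_lower j a haT
    rw [hax'] at h1
    exact h1.trans (mem_closedBall_zero_iff.1 hxball)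
  have hGc : ∀ j, Continuous (G j) := fun j => (hGsmooth j).continuous
  refine ⟨ρ, hρpos, ?_⟩
  rw [← hSdef]
  refine ⟨max 30 (7/cT), le_trans (by norm_num) (le_max_left _ _), ?_⟩
  intro x hx y hy
  have hx' := hx
  rw [hSdef] at hx'
  obtain ⟨hxY, hxball⟩ := hx'
  have hy' := hy
  rw [hSdef] at hy'
  obtain ⟨hyY, hyball⟩ := hy'
  rw [hY] at hxY hyY
  obtain ⟨j, hxj⟩ := mem_iUnion.1 hxY
  obtain ⟨k, hyk⟩ := mem_iUnion.1 hyY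
  by_cases hsame : ∃ i, x ∈ N i ∧ y ∈ N i
  · obtain ⟨i, hxi, hyi⟩ := hsame
    obtain ⟨a, haT, han, hax⟩ := decomp i x hxi hxball
    obtain ⟨b, hbT, hbn, hby⟩ := decomp i y hyi hyball
    have hPa : ‖a + G i a‖ ≤ ρ := by rw [hax]; exact mem_closedBall_zero_iff.1 hxball
    have hPb : ‖b + G i b‖ ≤ ρ := by rw [hby]; exact mem_closedBall_zero_iff.1 hyball
    have hbound := same_sheet_bound (T i) (G i) (hGc i) (hG0 i) ρ δ0 ε hρpos hρδ hεpos hε4 S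
      (fact_Pub i) (fact_Plip_ub i) (fact_Plip_lb i) (fact_scale_sq i) (point_mem i)
      a b haT hbT han hbn hPa hPb
    rw [hax, hby] at hbound
    refine hbound.trans (ENNReal.ofReal_le_ofReal ?_)
    have h30 : (30:ℝ) ≤ max 30 (7/cT) := le_max_left _ _
    exact mul_le_mul_of_nonneg_right h30 dist_nonneg
  · have hjk : j ≠ k := by
      intro h
      exact hsame ⟨j, hxj, h ▸ hyk⟩
    obtain ⟨a, haT, han, hax⟩ := decomp j x hxj hxball
    obtain ⟨b, hbT, hbn, hby⟩ := decomp k y hyk hyball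
    have hPa : ‖a + G j a‖ ≤ ρ := by rw [hax]; exact mem_closedBall_zero_iff.1 hxball
    have hPb : ‖b + G k b‖ ≤ ρ := by rw [hby]; exact mem_closedBall_zero_iff.1 hyball
    have hbound := cross_bound (T j) (T k) (G j) (G k) (hGc j) (hGc k) (hG0 j) (hG0 k)
      ρ δ0 ε hρpos hρδ hεpos hε4 S (fact_Plip_ub j) (fact_Plip_ub k)
      (fact_scale_norm j) (fact_scale_norm k) (point_mem j) (point_mem k)
      a b haT hbT han hbn hPa hPb
    rw [hax, hby] at hbound
    refine hbound.trans (ENNReal.ofReal_le_ofReal ?_)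
    have hsep := hcTsep j k hjk a haT b hbT
    have hGa := fact_G0 j a (han.trans hρδ)
    have hGb := fact_G0 k b (hbn.trans hρδ)
    have hsplit : a - b = ((a + G j a) - (b + G k b)) - (G j a - G k b) := by abel
    have htri : ‖a - b‖ ≤ ‖(a + G j a) - (b + G k b)‖ + ‖G j a - G k b‖ := by
      rw [hsplit]; exact norm_sub_le _ _
    have htri2 : ‖G j a - G k b‖ ≤ ε*‖a‖ + ε*‖b‖ :=
      (norm_sub_le _ _).trans (add_le_add hGa hGb)
    have hdxy : dist x y = ‖(a + G j a) - (b + G k b)‖ := by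
      rw [dist_eq_norm, hax, hby]
    have h3 : (cT/2)*(‖a‖+‖b‖) ≤ dist x y := by
      rw [hdxy]
      nlinarith [hsep, htri, htri2, hεc, norm_nonneg a, norm_nonneg b]
    have h4 : (5/2)*(‖a‖+‖b‖) ≤ (7/cT) * dist x y := by
      have hc2 : (5/2)*(‖a‖+‖b‖)*cT ≤ 7 * dist x y := by
        nlinarith [h3, dist_nonneg (x := x) (y := y)]
      calc (5/2)*(‖a‖+‖b‖) = ((5/2)*(‖a‖+‖b‖)*cT)/cT := by field_simp
        _ ≤ (7*dist x y)/cT := by gcongr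
        _ = (7/cT) * dist x y := by ring
    refine h4.trans ?_
    exact mul_le_mul_of_nonneg_right (le_max_right _ _) dist_nonneg
end

section
/- Let γ : [0,1] → ℂ \ {0} be a rectifiable loop (γ(0) = γ(1)) that is not null-homotopic in ℂ \ {0}. Then the length of γ is at least 2·|γ(0)|. -/
open Set Metric

/-- a rectifiable loop in ℂ \ {0} which is not null-homotopic has length
at least 2|γ(0)|. -/
theorem length_loop_ge {z : {w : ℂ // w ≠ 0}} (γ : Path z z)
    (hγ : ¬ Path.Homotopic γ (Path.refl z)) :
    ENNReal.ofReal (2 * ‖(z : ℂ)‖) ≤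
      pathLength (fun t : ℝ => ((γ (Set.projIcc 0 1 zero_le_one t) : {w : ℂ // w ≠ 0}) : ℂ)) := by
  have key : ∃ t : unitInterval, ∃ c : ℝ, 0 < c ∧
      ((γ t : {w : ℂ // w ≠ 0}) : ℂ) = -(c • (z : ℂ)) := by
    by_contra h
    push_neg at h
    apply hγ
    have hne : ∀ p : unitInterval × unitInterval,
        (1 - (p.1 : ℝ)) • ((γ p.2 : {w : ℂ // w ≠ 0}) : ℂ) + (p.1 : ℝ) • (z : ℂ) ≠ 0 := by
      rintro ⟨s, t⟩ hp0
      simp only at hp0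
      have hs0 : (0:ℝ) ≤ (s:ℝ) := s.2.1
      have hs1 : (s:ℝ) ≤ 1 := s.2.2
      rcases eq_or_lt_of_le hs1 with h1 | h1
      · rw [h1] at hp0
        simp at hp0
        exact z.2 hp0
      · have h1' : (0:ℝ) < 1 - s := by linarith
        have hg : ((γ t : {w : ℂ // w ≠ 0}) : ℂ) = -(((s:ℝ) / (1 - (s:ℝ))) • (z : ℂ)) := by
          have := hp0
          rw [Complex.real_smul, Complex.real_smul] at this
          rw [Complex.real_smul]
          have h1c : ((1:ℂ) - (s:ℝ)) ≠ 0 := by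
            simpa using Complex.ofReal_ne_zero.2 (ne_of_gt h1')
          field_simp
          push_cast at this ⊢
          ring_nf at this ⊢
          have hinv : (1 - ((s:ℝ):ℂ)) * (1 - ((s:ℝ):ℂ))⁻¹ = 1 := mul_inv_cancel₀ h1c
          linear_combination this + ((s:ℝ):ℂ) * (1 - ((s:ℝ):ℂ))⁻¹ * this
            + (((s:ℝ):ℂ) * (z:ℂ) - ((γ t : {w : ℂ // w ≠ 0}) : ℂ) * ((s:ℝ):ℂ)) * hinv
        rcases eq_or_lt_of_le hs0 with h0 | h0
        · rw [← h0] at hg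
          simp at hg
          exact (γ t).2 hg
        · exact h t ((s:ℝ) / (1 - (s:ℝ))) (div_pos h0 h1') hg
    constructor
    refine
      { toFun := fun p => ⟨(1 - (p.1 : ℝ)) • ((γ p.2 : {w : ℂ // w ≠ 0}) : ℂ)
            + (p.1 : ℝ) • (z : ℂ), hne p⟩
        continuous_toFun := ?_
        map_zero_left := ?_
        map_one_left := ?_
        prop' := ?_ }
    · apply Continuous.subtype_mk
      fun_prop
    · intro t
      ext
      simp
    · intro t
      ext
      simp
    · intro s x hx
      rcases hx with hx | hx <;> subst hx <;> ext <;> simp <;> ring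
  obtain ⟨t, c, hc, ht⟩ := key
  set f : ℝ → ℂ := fun u : ℝ =>
    ((γ (Set.projIcc 0 1 zero_le_one u) : {w : ℂ // w ≠ 0}) : ℂ) with hf
  have hf0 : f 0 = (z : ℂ) := by
    simp only [hf, Set.projIcc_left]
    norm_num [γ.source]
  have hf1 : f 1 = (z : ℂ) := by
    simp only [hf, Set.projIcc_right]
    norm_num [γ.target]
  have hft : f (t : ℝ) = -(c • (z : ℂ)) := by
    simp only [hf, Set.projIcc_val]
    exact ht
  have hzle : ENNReal.ofReal ‖(z:ℂ)‖ ≤ edist ((z:ℂ)) (-(c • (z:ℂ))) := by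
    rw [edist_dist, Complex.dist_eq]
    apply ENNReal.ofReal_le_ofReal
    have : (z:ℂ) - -(c • (z:ℂ)) = (1 + c) • (z:ℂ) := by
      rw [Complex.real_smul, Complex.real_smul]; push_cast; ring
    rw [this, Complex.real_smul, norm_mul, Complex.norm_real,
      Real.norm_eq_abs, abs_of_pos (by linarith : (0:ℝ) < 1 + c)]
    have hz : 0 ≤ ‖(z:ℂ)‖ := norm_nonneg _
    nlinarith
  have hsplit : eVariationOn f (Icc 0 (t:ℝ)) + eVariationOn f (Icc (t:ℝ) 1)
      = eVariationOn f (Icc (0:ℝ) 1) := by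
    have := eVariationOn.Icc_add_Icc f (s := (univ : Set ℝ)) t.2.1 t.2.2 (mem_univ _)
    simpa using this
  have h1 : edist (f 0) (f (t:ℝ)) ≤ eVariationOn f (Icc 0 (t:ℝ)) :=
    eVariationOn.edist_le f (left_mem_Icc.2 t.2.1) (right_mem_Icc.2 t.2.1)
  have h2 : edist (f (t:ℝ)) (f 1) ≤ eVariationOn f (Icc (t:ℝ) 1) :=
    eVariationOn.edist_le f (left_mem_Icc.2 t.2.2) (right_mem_Icc.2 t.2.2)
  calc ENNReal.ofReal (2 * ‖(z : ℂ)‖)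
      = ENNReal.ofReal ‖(z:ℂ)‖ + ENNReal.ofReal ‖(z:ℂ)‖ := by
        rw [← ENNReal.ofReal_add (norm_nonneg _) (norm_nonneg _)]; ring_nf
    _ ≤ edist (f 0) (f (t:ℝ)) + edist (f (t:ℝ)) (f 1) := by
        rw [hf0, hf1, hft]
        exact add_le_add hzle (by rw [edist_comm]; exact hzle)
    _ ≤ eVariationOn f (Icc 0 (t:ℝ)) + eVariationOn f (Icc (t:ℝ) 1) := add_le_add h1 h2
    _ = eVariationOn f (Icc (0:ℝ) 1) := hsplit
    _ = pathLength f := rfl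
end

section
/- Let G : {z ∈ ℂ : |z| ≥ R₁} → ℂ^{n−1} be holomorphic (on a neighbourhood of this set) with G(z) → a and G'(z) → 0 as |z| → ∞. Then for every ε > 0 there exists r_ε ≥ R₁ such that G is ε-Lipschitz on {z : |z| ≥ r_ε}: |G(z) − G(w)| ≤ ε·|z − w| for all z, w with |z|, |w| ≥ r_ε. -/
open Set Metric

/-- a holomorphic map on a neighbourhood of {|z| ≥ R₁} with G → a and
G' → 0 at infinity is ε-Lipschitz outside a large enough disk, for every ε > 0. -/
theorem eventually_eps_lipschitz {F : Type*} [NormedAddCommGroup F] [NormedSpace ℂ F]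
    (R₁ : ℝ) (G : ℂ → F) (a : F)
    (hG : ∀ z : ℂ, R₁ ≤ ‖z‖ → DifferentiableAt ℂ G z)
    (hGa : Filter.Tendsto G (Bornology.cobounded ℂ) (nhds a))
    (hG' : Filter.Tendsto (deriv G) (Bornology.cobounded ℂ) (nhds 0)) :
    ∀ ε : ℝ, 0 < ε → ∃ r : ℝ, R₁ ≤ r ∧
      ∀ z w : ℂ, r ≤ ‖z‖ → r ≤ ‖w‖ → ‖G z - G w‖ ≤ ε * ‖z - w‖ := by
  intro ε hε
  have h1 : ∀ᶠ z in Bornology.cobounded ℂ, ‖deriv G z‖ ≤ ε := by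
    filter_upwards [hG'.eventually (Metric.ball_mem_nhds 0 hε)] with z hz
    simpa [dist_eq_norm] using le_of_lt hz
  obtain ⟨r₀, -, hr₀⟩ := (Filter.hasBasis_cobounded_norm (E := ℂ)).eventually_iff.mp h1
  set ρ : ℝ := max r₀ (max R₁ 1) with hρ
  have hρ1 : (1 : ℝ) ≤ ρ := le_trans (le_max_right _ _) (le_max_right _ _)
  have hρpos : 0 < ρ := lt_of_lt_of_le one_pos hρ1
  have h2 : ∀ᶠ z in Bornology.cobounded ℂ, ‖G z - a‖ ≤ ε * ρ / 2 := by
    have : (0:ℝ) < ε * ρ / 2 := by positivity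
    filter_upwards [hGa.eventually (Metric.ball_mem_nhds a this)] with z hz
    simpa [dist_eq_norm] using le_of_lt hz
  obtain ⟨r₁, -, hr₁⟩ := (Filter.hasBasis_cobounded_norm (E := ℂ)).eventually_iff.mp h2
  refine ⟨max r₁ (2 * ρ), ?_, ?_⟩
  · calc R₁ ≤ ρ := le_trans (le_max_left _ _) (le_max_right _ _)
      _ ≤ 2 * ρ := by linarith
      _ ≤ _ := le_max_right _ _
  intro z w hz hw
  rcases le_or_gt ‖z - w‖ ρ with hcase | hcase
  · -- segment case
    have hseg : segment ℝ w z ⊆ Metric.closedBall z ‖z - w‖ := by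
      apply (convex_closedBall z ‖z - w‖).segment_subset
      · simp [Metric.mem_closedBall, dist_eq_norm, norm_sub_rev]
      · simp [Metric.mem_closedBall]
    have hnorm : ∀ u ∈ segment ℝ w z, ρ ≤ ‖u‖ := by
      intro u hu
      have h1 : ‖u - z‖ ≤ ρ := le_trans (by simpa [dist_eq_norm] using hseg hu) hcase
      have h2 : 2 * ρ ≤ ‖z‖ := le_trans (le_max_right _ _) hz
      have := norm_sub_norm_le u z
      have h3 : ‖u‖ ≥ ‖z‖ - ‖u - z‖ := by linarith [norm_sub_norm_le z u, norm_sub_rev u z ▸ (norm_sub_norm_le z u)]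
      calc ρ = 2 * ρ - ρ := by ring
        _ ≤ ‖z‖ - ‖u - z‖ := by linarith
        _ ≤ ‖u‖ := by
            have := norm_sub_norm_le z u
            rw [norm_sub_rev] at this
            linarith
    have := Convex.norm_image_sub_le_of_norm_fderiv_le
      (𝕜 := ℂ) (f := G) (C := ε)
      (fun u hu => hG u (le_trans (le_trans (le_max_left _ _) (le_max_right _ _)) (hnorm u hu)))
      (fun u hu => by
        rw [← norm_deriv_eq_norm_fderiv]
        exact hr₀ (le_trans (le_max_left _ _) (hnorm u hu)))
      (convex_segment w z) (left_mem_segment ℝ w z) (right_mem_segment ℝ w z)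
    simpa using this
  · -- far case
    have hz1 : r₁ ≤ ‖z‖ := le_trans (le_max_left _ _) hz
    have hw1 : r₁ ≤ ‖w‖ := le_trans (le_max_left _ _) hw
    calc ‖G z - G w‖ ≤ ‖G z - a‖ + ‖G w - a‖ := by
          have := norm_sub_le (G z - a) (G w - a); simpa using this
      _ ≤ ε * ρ / 2 + ε * ρ / 2 := add_le_add (hr₁ hz1) (hr₁ hw1)
      _ = ε * ρ := by ring
      _ ≤ ε * ‖z - w‖ := by nlinarith
end

section
/- Let S ⊆ M × P (product of metric spaces with sum distance) be the graph of a K-Lipschitz function F : T → P over a subset T of M, where T is LNE with constant L. Then S is LNE with constant at most L·(1+K). -/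
open Set Metric

lemma dist_L1 {M P : Type*} [MetricSpace M] [MetricSpace P] (f g : WithLp 1 (M × P)) :
    dist f g = dist f.fst g.fst + dist f.snd g.snd := by
  rw [WithLp.prod_dist_eq_add (by norm_num)]
  norm_num

/-- the graph of a K-Lipschitz map over a set which is LNE with constant L
is LNE with constant at most L(1+K) in the product with the sum distance. -/
theorem graph_isLNEWith {M P : Type*} [MetricSpace M] [MetricSpace P]
    (T : Set M) (L : ℝ) (hL : 1 ≤ L) (hT : IsLNEWith L T)
    (F : M → P) (K : ℝ) (hK : 0 ≤ K)
    (hF : ∀ x ∈ T, ∀ y ∈ T, dist (F x) (F y) ≤ K * dist x y) :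
    IsLNEWith (L * (1 + K))
      {q : WithLp 1 (M × P) |
        (WithLp.equiv 1 (M × P) q).1 ∈ T ∧
        (WithLp.equiv 1 (M × P) q).2 = F (WithLp.equiv 1 (M × P) q).1} := by
  intro x hx y hy
  obtain ⟨hxT, hxF⟩ := hx
  obtain ⟨hyT, hyF⟩ := hy
  set a : M := (WithLp.equiv 1 (M × P) x).1 with ha
  set b : M := (WithLp.equiv 1 (M × P) y).1 with hb
  set C : NNReal := ⟨1 + K, by linarith⟩ with hC
  set f : M → WithLp 1 (M × P) := fun m => (WithLp.equiv 1 (M × P)).symm (m, F m) with hfdef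
  have hf : LipschitzOnWith C f T := by
    intro u hu v hv
    rw [edist_dist, edist_dist, dist_L1]
    have : dist (F u) (F v) ≤ K * dist u v := hF u hu v hv
    calc (ENNReal.ofReal (dist (f u).fst (f v).fst + dist (f u).snd (f v).snd))
        = ENNReal.ofReal (dist u v + dist (F u) (F v)) := rfl
      _ ≤ ENNReal.ofReal ((1 + K) * dist u v) := by
          apply ENNReal.ofReal_le_ofReal; nlinarith [dist_nonneg (x := u) (y := v)]
      _ = (C : ENNReal) * ENNReal.ofReal (dist u v) := by
          rw [ENNReal.ofReal_mul (by linarith)]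
          congr 1
          simp only [hC, ENNReal.ofReal]
          exact congrArg _ (Real.toNNReal_of_nonneg (by linarith))
  -- key: innerDist S x y ≤ C * l for each admissible l
  have key : ∀ l ∈ {l : ENNReal | ∃ γ : ℝ → M, ContinuousOn γ (Set.Icc 0 1) ∧
      Set.MapsTo γ (Set.Icc 0 1) T ∧ γ 0 = a ∧ γ 1 = b ∧ l = pathLength γ},
      innerDist {q : WithLp 1 (M × P) |
        (WithLp.equiv 1 (M × P) q).1 ∈ T ∧
        (WithLp.equiv 1 (M × P) q).2 = F (WithLp.equiv 1 (M × P) q).1} x y ≤ C * l := by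
    rintro l ⟨γ, hγc, hγm, hγ0, hγ1, rfl⟩
    have h1 : innerDist {q : WithLp 1 (M × P) |
        (WithLp.equiv 1 (M × P) q).1 ∈ T ∧
        (WithLp.equiv 1 (M × P) q).2 = F (WithLp.equiv 1 (M × P) q).1} x y
        ≤ pathLength (f ∘ γ) := by
      apply sInf_le
      refine ⟨f ∘ γ, ?_, ?_, ?_, ?_, rfl⟩
      · exact (hf.continuousOn).comp hγc hγm
      · intro t ht
        exact ⟨hγm ht, rfl⟩
      · rw [Function.comp_apply, hγ0]
        have : x = (WithLp.equiv 1 (M × P)).symm (a, F a) := by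
          apply (WithLp.equiv 1 (M × P)).injective
          simp only [Equiv.apply_symm_apply]
          exact Prod.ext rfl hxF
        exact this.symm
      · rw [Function.comp_apply, hγ1]
        have : y = (WithLp.equiv 1 (M × P)).symm (b, F b) := by
          apply (WithLp.equiv 1 (M × P)).injective
          simp only [Equiv.apply_symm_apply]
          exact Prod.ext rfl hyF
        exact this.symm
    exact h1.trans (hf.comp_eVariationOn_le hγm)
  have hC0 : (C : ENNReal) ≠ 0 := by
    simp only [ne_eq, ENNReal.coe_eq_zero, hC]
    intro h
    have := congrArg (fun r : NNReal => (r : ℝ)) (ENNReal.coe_eq_zero.mp h)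
    change 1 + K = 0 at this
    linarith
  have hle : innerDist {q : WithLp 1 (M × P) |
      (WithLp.equiv 1 (M × P) q).1 ∈ T ∧
      (WithLp.equiv 1 (M × P) q).2 = F (WithLp.equiv 1 (M × P) q).1} x y
      ≤ (C : ENNReal) * innerDist T a b := by
    rw [mul_comm, ← ENNReal.div_le_iff_le_mul (Or.inl hC0) (Or.inl ENNReal.coe_ne_top)]
    apply le_sInf
    intro l hl
    rw [ENNReal.div_le_iff_le_mul (Or.inl hC0) (Or.inl ENNReal.coe_ne_top), mul_comm]
    exact key l hl
  have hab : dist a b ≤ dist x y := by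
    rw [dist_L1]
    exact le_add_of_nonneg_right dist_nonneg
  calc innerDist {q : WithLp 1 (M × P) |
      (WithLp.equiv 1 (M × P) q).1 ∈ T ∧
      (WithLp.equiv 1 (M × P) q).2 = F (WithLp.equiv 1 (M × P) q).1} x y
      ≤ (C : ENNReal) * innerDist T a b := hle
    _ ≤ (C : ENNReal) * ENNReal.ofReal (L * dist a b) := mul_le_mul_right (hT hxT hyT) _
    _ = ENNReal.ofReal ((1 + K) * (L * dist a b)) := by
        rw [ENNReal.ofReal_mul (by linarith : (0:ℝ) ≤ 1 + K)]
        congr 1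
        simp only [hC, ENNReal.ofReal]
        rw [Real.toNNReal_of_nonneg (by linarith : (0:ℝ) ≤ 1 + K)]
        rfl
    _ ≤ ENNReal.ofReal (L * (1 + K) * dist x y) := by
        apply ENNReal.ofReal_le_ofReal
        have h0 : (0:ℝ) ≤ L * (1 + K) := by nlinarith
        nlinarith [mul_le_mul_of_nonneg_left hab h0]
end

section
/- Let C₁, C₂ be disjoint closed subsets of ℝ^n, let K be a compact set, and suppose S = C₁ ∪ C₂ ∪ K with every path in S from C₁ \ K to C₂ \ K passing through K. Suppose there are sequences (x_l) ⊆ C₁ and (x_l') ⊆ C₂ with |x_l|, |x_l'| → ∞ and |x_l − x_l'| = o(|x_l|). Then S is not LNE. -/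
open Set Metric

/-- if S = C₁ ∪ C₂ ∪ K with K compact, every path in S from C₁ \ K to
C₂ \ K passing through K, and there are sequences going to infinity in C₁ and C₂ with
|x_l − x_l'| = o(|x_l|), then S is not LNE. -/
theorem not_LNE_of_two_branches {n : ℕ}
    (C₁ C₂ K S : Set (EuclideanSpace ℝ (Fin n)))
    (h1 : IsClosed C₁) (h2 : IsClosed C₂) (hdisj : Disjoint C₁ C₂)
    (hK : IsCompact K) (hS : S = C₁ ∪ C₂ ∪ K)
    (hpass : ∀ γ : ℝ → EuclideanSpace ℝ (Fin n),
      ContinuousOn γ (Set.Icc 0 1) → Set.MapsTo γ (Set.Icc 0 1) S →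
      γ 0 ∈ C₁ \ K → γ 1 ∈ C₂ \ K → ∃ t ∈ Set.Icc (0 : ℝ) 1, γ t ∈ K)
    (x x' : ℕ → EuclideanSpace ℝ (Fin n))
    (hx : ∀ l, x l ∈ C₁) (hx' : ∀ l, x' l ∈ C₂)
    (hnorm : Filter.Tendsto (fun l => ‖x l‖) Filter.atTop Filter.atTop)
    (hnorm' : Filter.Tendsto (fun l => ‖x' l‖) Filter.atTop Filter.atTop)
    (hlittle : (fun l => ‖x l - x' l‖) =o[Filter.atTop] fun l => ‖x l‖) :
    ¬ IsLNE S := by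
  rintro ⟨L, hL1, hLNE⟩
  obtain ⟨R₀, hR₀⟩ := hK.isBounded.subset_closedBall 0
  set R : ℝ := max R₀ 0 with hRdef
  have hR : K ⊆ closedBall 0 R := hR₀.trans (closedBall_subset_closedBall (le_max_left _ _))
  have hR0 : 0 ≤ R := le_max_right _ _
  have hc : (0:ℝ) < 1 / (4 * (L + 1)) := by positivity
  have hε := hlittle.def hc
  have h1' : ∀ᶠ l in Filter.atTop, ‖x l‖ > 4 * R + 4 := hnorm.eventually_gt_atTop _
  have h2' : ∀ᶠ l in Filter.atTop, ‖x' l‖ > R := hnorm'.eventually_gt_atTop _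
  obtain ⟨l, hεl, h1l, h2l⟩ := (hε.and (h1'.and h2')).exists
  simp only [Real.norm_eq_abs, abs_norm] at hεl
  have hxK : x l ∉ K := fun h => by
    have := mem_closedBall_zero_iff.mp (hR h); linarith
  have hx'K : x' l ∉ K := fun h => by
    have := mem_closedBall_zero_iff.mp (hR h); linarith
  -- lower bound on innerDist
  have hlow : ENNReal.ofReal ((‖x l‖ - R) + (‖x' l‖ - R)) ≤ innerDist S (x l) (x' l) := by
    apply le_sInf
    rintro e ⟨γ, hcont, hmaps, hγ0, hγ1, rfl⟩
    obtain ⟨t, ht, htK⟩ := hpass γ hcont hmaps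
      (by rw [hγ0]; exact ⟨hx l, hxK⟩) (by rw [hγ1]; exact ⟨hx' l, hx'K⟩)
    have key : eVariationOn γ (Icc 0 1 ∩ Icc 0 t) + eVariationOn γ (Icc 0 1 ∩ Icc t 1)
        = eVariationOn γ (Icc 0 1 ∩ Icc 0 1) :=
      eVariationOn.Icc_add_Icc γ ht.1 ht.2 ht
    have e1 : edist (γ 0) (γ t) ≤ eVariationOn γ (Icc 0 1 ∩ Icc 0 t) :=
      eVariationOn.edist_le γ ⟨⟨le_rfl, zero_le_one⟩, le_rfl, ht.1⟩ ⟨ht, ht.1, le_rfl⟩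
    have e2 : edist (γ t) (γ 1) ≤ eVariationOn γ (Icc 0 1 ∩ Icc t 1) :=
      eVariationOn.edist_le γ ⟨ht, le_rfl, ht.2⟩ ⟨⟨zero_le_one, le_rfl⟩, ht.2, le_rfl⟩
    have hKt := mem_closedBall_zero_iff.mp (hR htK)
    have d1 : ENNReal.ofReal (‖x l‖ - R) ≤ edist (γ 0) (γ t) := by
      rw [edist_dist, hγ0]
      apply ENNReal.ofReal_le_ofReal
      have : ‖x l‖ - ‖γ t‖ ≤ dist (x l) (γ t) := by
        have := norm_sub_norm_le (x l) (γ t)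
        rwa [dist_eq_norm]
      linarith
    have d2 : ENNReal.ofReal (‖x' l‖ - R) ≤ edist (γ t) (γ 1) := by
      rw [edist_dist, hγ1]
      apply ENNReal.ofReal_le_ofReal
      have : ‖x' l‖ - ‖γ t‖ ≤ dist (γ t) (x' l) := by
        have := norm_sub_norm_le (x' l) (γ t)
        rw [dist_comm, dist_eq_norm]; linarith [norm_sub_norm_le (x' l) (γ t)]
      linarith
    calc ENNReal.ofReal ((‖x l‖ - R) + (‖x' l‖ - R))
        ≤ ENNReal.ofReal (‖x l‖ - R) + ENNReal.ofReal (‖x' l‖ - R) :=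
          ENNReal.ofReal_add_le
      _ ≤ edist (γ 0) (γ t) + edist (γ t) (γ 1) := add_le_add d1 d2
      _ ≤ _ := by
          rw [pathLength, ← inter_self (Icc (0:ℝ) 1), ← key]
          exact add_le_add e1 e2
  have hup := hLNE (by rw [hS]; exact Or.inl (Or.inl (hx l))) (by rw [hS]; exact Or.inl (Or.inr (hx' l)))
  have hcomb := hlow.trans hup
  rw [ENNReal.ofReal_le_ofReal_iff (by positivity)] at hcomb
  rw [dist_eq_norm] at hcomb
  have h3 : L * ‖x l - x' l‖ ≤ L * (1 / (4 * (L + 1)) * ‖x l‖) := by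
    apply mul_le_mul_of_nonneg_left hεl (by linarith)
  have h4 : L * (1 / (4 * (L + 1)) * ‖x l‖) ≤ ‖x l‖ / 4 := by
    have hp : (0:ℝ) < L + 1 := by linarith
    calc L * (1 / (4 * (L + 1)) * ‖x l‖) = L / (L + 1) * (‖x l‖ / 4) := by
          field_simp
      _ ≤ 1 * (‖x l‖ / 4) :=
          mul_le_mul_of_nonneg_right ((div_le_one hp).mpr (by linarith))
            (by positivity)
      _ = ‖x l‖ / 4 := one_mul _
  nlinarith
end
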